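/- arXiv:1909.01931 — 7 statements merged into one kernel-verified Lean document; each statement's English description precedes it below -/
import Mathlib

section
/- For each k ∈ {1,…,n} and every λ ∈ ℝ, E[exp(λ D_k − (λ²/2) V_k) | X₁, …, X_{k−1}] ≤ 1 almost surely, where D_k = E[f(S) | X₁,…,X_k] − E[f(S) | X₁,…,X_{k−1}] is the k-th Doob martingale difference of f(S) and V_k = E[(f(S) − f(S^(k)))² | X₁,…,X_k]. -/
set_option autoImplicit false
set_option maxHeartbeats 1000000

open MeasureTheory ProbabilityTheory Real

/-- The σ-algebra generated by the coordinates `X i` for `(i : ℕ) < k`,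
i.e. by the first `k` components of the sample. -/
def firstCoordsSigma {Ω : Type*} {n : ℕ} {Z : Fin n → Type*} [∀ i, MeasurableSpace (Z i)]
    (X : ∀ i, Ω → Z i) (k : ℕ) : MeasurableSpace Ω :=
  ⨆ i : Fin n, ⨆ _ : (i : ℕ) < k, MeasurableSpace.comap (X i) inferInstance



lemma rat_tangent_le {y c : ℝ} (h : ∀ q : ℚ, Real.exp q * (1 + y - q) ≤ c) :
    Real.exp y ≤ c := by
  have hcont : Continuous fun t : ℝ => Real.exp t * (1 + y - t) := by continuity
  -- choose rationals approaching y
  have hq : ∀ m : ℕ, ∃ q : ℚ, y < (q : ℝ) ∧ (q : ℝ) < y + 1 / (m + 1) := by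
    intro m
    have : (0:ℝ) < 1 / (m + 1 : ℝ) := by positivity
    exact_mod_cast exists_rat_btwn (by linarith : y < y + 1 / (m + 1 : ℝ))
  choose q hq1 hq2 using hq
  have htend : Filter.Tendsto (fun m : ℕ => ((q m : ℝ))) Filter.atTop (nhds y) := by
    have h1 : Filter.Tendsto (fun m : ℕ => y + 1 / (m + 1 : ℝ)) Filter.atTop (nhds (y + 0)) := by
      exact Filter.Tendsto.const_add _ tendsto_one_div_add_atTop_nhds_zero_nat
    rw [add_zero] at h1
    exact tendsto_of_tendsto_of_tendsto_of_le_of_le tendsto_const_nhds h1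
      (fun m => (hq1 m).le) (fun m => (hq2 m).le)
  have : Filter.Tendsto (fun m : ℕ => Real.exp (q m) * (1 + y - q m)) Filter.atTop
      (nhds (Real.exp y * (1 + y - y))) := (hcont.tendsto y).comp htend
  have h2 : Real.exp y * (1 + y - y) ≤ c := le_of_tendsto this (Filter.Eventually.of_forall fun m => h (q m))
  simpa using h2

lemma condexp_exp_jensen {Ω : Type*} [m0 : MeasurableSpace Ω] {μ : Measure Ω}
    [IsProbabilityMeasure μ] {m : MeasurableSpace Ω} (hm : m ≤ m0) {g : Ω → ℝ}
    (hg : Integrable g μ) (hexp : Integrable (fun ω => Real.exp (g ω)) μ) :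
    ∀ᵐ ω ∂μ, Real.exp ((μ[g|m]) ω) ≤ (μ[fun ω => Real.exp (g ω)|m]) ω := by
  have key : ∀ q : ℚ, ∀ᵐ ω ∂μ,
      Real.exp q * (1 + (μ[g|m]) ω - q) ≤ (μ[fun ω => Real.exp (g ω)|m]) ω := by
    intro q
    have haff : Integrable (fun ω => Real.exp q * (1 - q) + Real.exp q * g ω) μ :=
      (integrable_const _).add (hg.const_mul _)
    have hle : (fun ω => Real.exp q * (1 - q) + Real.exp q * g ω) ≤ᵐ[μ]
        (fun ω => Real.exp (g ω)) := by
      refine Filter.Eventually.of_forall fun ω => ?_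
      have h1 : 1 + (g ω - q) ≤ Real.exp (g ω - q) := by
        have := Real.add_one_le_exp (g ω - q); linarith
      have h2 : Real.exp q * (1 + (g ω - q)) ≤ Real.exp q * Real.exp (g ω - q) :=
        mul_le_mul_of_nonneg_left h1 (Real.exp_nonneg q)
      rw [← Real.exp_add] at h2
      calc Real.exp q * (1 - q) + Real.exp q * g ω = Real.exp q * (1 + (g ω - q)) := by ring
        _ ≤ Real.exp (q + (g ω - q)) := h2
        _ = Real.exp (g ω) := by ring_nf
    have hmono := condExp_mono (μ := μ) (m := m) haff hexp hle
    have hlin : μ[(fun ω => Real.exp q * (1 - q) + Real.exp q * g ω)|m] =ᵐ[μ]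
        fun ω => Real.exp q * (1 - q) + Real.exp q * (μ[g|m]) ω := by
      have h1 : μ[((fun _ => Real.exp q * (1 - q)) + (Real.exp q • g))|m] =ᵐ[μ]
          μ[(fun _ => Real.exp q * (1 - q))|m] + μ[(Real.exp q • g)|m] :=
        condExp_add (μ := μ) (m := m)
          (integrable_const (Real.exp q * (1 - q))) (hg.smul (Real.exp q))
      have h1c : μ[(fun _ : Ω => Real.exp q * (1 - q))|m] = fun _ => Real.exp q * (1 - q) :=
        condExp_const hm _
      have h2 : μ[(Real.exp q • g)|m] =ᵐ[μ] Real.exp q • μ[g|m] := condExp_smul _ _ _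
      filter_upwards [h1, h2] with ω h1 h2
      have : ((fun _ => Real.exp q * (1 - q)) + Real.exp q • g) = fun ω => Real.exp q * (1 - q) + Real.exp q * g ω := by
        funext ω'; simp [smul_eq_mul]
      rw [← this]
      rw [h1]
      simp only [Pi.add_apply, h1c, Pi.smul_apply, smul_eq_mul] at h2 ⊢
      rw [h2]
    filter_upwards [hmono, hlin] with ω hmono hlin
    calc Real.exp q * (1 + (μ[g|m]) ω - q)
        = Real.exp q * (1 - q) + Real.exp q * (μ[g|m]) ω := by ring
      _ = (μ[(fun ω => Real.exp q * (1 - q) + Real.exp q * g ω)|m]) ω := hlin.symm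
      _ ≤ _ := hmono
  rw [← ae_all_iff] at key
  filter_upwards [key] with ω hω
  exact rat_tangent_le hω


def recomb {n : ℕ} {Z : Fin n → Type*} (k : Fin n)
    (y : ∀ i : {i : Fin n // i ≠ k}, Z i.val) (a : Z k) : ∀ i, Z i :=
  fun i => if h : i = k then cast (congrArg Z h.symm) a else y ⟨i, h⟩

lemma measurable_recomb {n : ℕ} {Z : Fin n → Type*} [∀ i, MeasurableSpace (Z i)] (k : Fin n) :
    Measurable (fun p : (∀ i : {i : Fin n // i ≠ k}, Z i.val) × Z k => recomb k p.1 p.2) := by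
  apply measurable_pi_lambda
  intro i
  by_cases h : i = k
  · subst h
    simp only [recomb, dif_pos rfl]
    exact measurable_snd
  · simp only [recomb, dif_neg h]
    exact (measurable_pi_apply _).comp measurable_fst

lemma recomb_self {n : ℕ} {Z : Fin n → Type*} (k : Fin n) (x : ∀ i, Z i) :
    recomb k (fun i => x i.val) (x k) = x := by
  funext i
  by_cases h : i = k
  · subst h; simp [recomb]
  · simp [recomb, h]

lemma recomb_update {n : ℕ} {Z : Fin n → Type*} [DecidableEq (Fin n)] (k : Fin n)
    (x : ∀ i, Z i) (a : Z k) :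
    recomb k (fun i => x i.val) a = Function.update x k a := by
  funext i
  by_cases h : i = k
  · subst h; simp [recomb]
  · simp [recomb, h, Function.update_of_ne h]

theorem main_aux
    {Ω : Type*} [mΩ : MeasurableSpace Ω] {μ : Measure Ω} [IsProbabilityMeasure μ]
    {n : ℕ} {Z : Fin n → Type*} [∀ i, MeasurableSpace (Z i)]
    (X X' : ∀ i, Ω → Z i)
    (hX : ∀ i, Measurable (X i)) (hX' : ∀ i, Measurable (X' i))
    (hindep : iIndepFun
      (fun p : Fin n × Bool => if p.2 then X p.1 else X' p.1) μ)
    (hid : ∀ i, IdentDistrib (X' i) (X i) μ μ)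
    (f : (∀ i, Z i) → ℝ) (hf : Measurable f) (k : Fin n) (lam : ℝ)
    (hL2 : MemLp (fun ω => f (fun i => X i ω)) 2 μ)
    (hL2k : MemLp (fun ω => f (fun i => X i ω)
      - f (Function.update (fun i => X i ω) k (X' k ω))) 2 μ)
    (A : Set Ω) (hA : MeasurableSet[firstCoordsSigma X (k : ℕ)] A) :
    ∫⁻ ω in A, ENNReal.ofReal (exp (lam *
        ((μ[fun ω' => f (fun i => X i ω') | firstCoordsSigma X ((k : ℕ) + 1)]) ω
          - (μ[fun ω' => f (fun i => X i ω') | firstCoordsSigma X (k : ℕ)]) ω)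
      - lam ^ 2 / 2 * (μ[fun ω' => (f (fun i => X i ω')
          - f (Function.update (fun i => X i ω') k (X' k ω'))) ^ 2 |
            firstCoordsSigma X ((k : ℕ) + 1)]) ω)) ∂μ ≤ μ A := by
  classical
  -- basic notation
  set fS : Ω → ℝ := fun ω => f (fun i => X i ω) with hfS_def
  set fSk : Ω → ℝ := fun ω => f (Function.update (fun i => X i ω) k (X' k ω)) with hfSk_def
  have hm0 : firstCoordsSigma X (k : ℕ) ≤ mΩ := iSup_le fun i => iSup_le fun _ => (hX i).comap_le
  have hm1 : firstCoordsSigma X ((k : ℕ) + 1) ≤ mΩ :=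
    iSup_le fun i => iSup_le fun _ => (hX i).comap_le
  have hm01 : firstCoordsSigma X (k : ℕ) ≤ firstCoordsSigma X ((k : ℕ) + 1) := by
    refine iSup_le fun i => iSup_le fun hik => ?_
    exact le_iSup_of_le i (le_iSup (fun _ : (i:ℕ) < (k:ℕ)+1 =>
      MeasurableSpace.comap (X i) inferInstance) (Nat.lt_succ_of_lt hik))
  -- coordinate machinery
  set Y : Ω → ∀ i : {i : Fin n // i ≠ k}, Z i.val := fun ω i => X i.val ω with hY_def
  have hYmeas : Measurable Y := measurable_pi_lambda _ fun i => hX i.val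
  have hfS_eq : ∀ ω, fS ω = f (recomb k (Y ω) (X k ω)) := fun ω =>
    congrArg f (recomb_self k (fun i => X i ω)).symm
  have hfSk_eq : ∀ ω, fSk ω = f (recomb k (Y ω) (X' k ω)) := fun ω =>
    congrArg f (recomb_update k (fun i => X i ω) (X' k ω)).symm
  have hrecomb_meas : Measurable (fun p : (∀ i : {i : Fin n // i ≠ k}, Z i.val) × Z k =>
      recomb k p.1 p.2) := measurable_recomb k
  have hfSmeas : Measurable fS := hf.comp (measurable_pi_lambda _ hX)
  have hfSkmeas : Measurable fSk := by
    have : fSk = fun ω => f (recomb k (Y ω) (X' k ω)) := funext hfSk_eq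
    rw [this]
    exact hf.comp (hrecomb_meas.comp (hYmeas.prodMk (hX' k)))
  -- m0 is below the sigma-algebra of Y
  have hm0Y : firstCoordsSigma X (k : ℕ) ≤ MeasurableSpace.comap Y MeasurableSpace.pi := by
    refine iSup_le fun i => iSup_le fun hik => ?_
    have hne : i ≠ k := by
      intro h; subst h; exact lt_irrefl _ hik
    have hXiY : X i = (fun y : ∀ j : {j : Fin n // j ≠ k}, Z j.val => y ⟨i, hne⟩) ∘ Y := rfl
    calc MeasurableSpace.comap (X i) inferInstance
        = MeasurableSpace.comap Y (MeasurableSpace.comap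
            (fun y : ∀ j : {j : Fin n // j ≠ k}, Z j.val => y ⟨i, hne⟩) inferInstance) := by
          rw [MeasurableSpace.comap_comp, ← hXiY]
      _ ≤ MeasurableSpace.comap Y MeasurableSpace.pi :=
          MeasurableSpace.comap_mono (measurable_pi_apply _).comap_le
  -- independence facts
  have hξmeas : ∀ p : Fin n × Bool,
      Measurable ((fun p : Fin n × Bool => if p.2 then X p.1 else X' p.1) p) := by
    intro p
    by_cases hp : p.2 = true
    · simp only [hp, if_true]; exact hX p.1
    · simp only [Bool.not_eq_true] at hp; simp only [hp, Bool.false_eq_true, if_false]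
      exact hX' p.1
  have hYT : IndepFun Y (fun ω => (X k ω, X' k ω)) μ := by
    have base := hindep.indepFun_finset
      (Finset.univ.filter (fun p : Fin n × Bool => p.1 ≠ k))
      ({(k, true), (k, false)} : Finset (Fin n × Bool))
      (by simp [Finset.disjoint_right]) hξmeas
    exact base.comp
      (show Measurable (fun t : ∀ i : (Finset.univ.filter (fun p : Fin n × Bool => p.1 ≠ k)),
          Z (i : Fin n × Bool).1 =>
          (fun j : {i : Fin n // i ≠ k} => t ⟨(j.val, true), by simpa using j.2⟩) : _) from
        measurable_pi_lambda _ fun j => measurable_pi_apply _)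
      (show Measurable (fun s : ∀ i : ({(k, true), (k, false)} : Finset (Fin n × Bool)),
          Z (i : Fin n × Bool).1 =>
          ((s ⟨(k, true), by simp⟩, s ⟨(k, false), by simp⟩) : Z k × Z k)) from
        (measurable_pi_apply _).prodMk (measurable_pi_apply _))
  have hYT' : IndepFun Y (fun ω => (X' k ω, X k ω)) μ := by
    have base := hindep.indepFun_finset
      (Finset.univ.filter (fun p : Fin n × Bool => p.1 ≠ k))
      ({(k, true), (k, false)} : Finset (Fin n × Bool))
      (by simp [Finset.disjoint_right]) hξmeas
    exact base.comp
      (show Measurable (fun t : ∀ i : (Finset.univ.filter (fun p : Fin n × Bool => p.1 ≠ k)),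
          Z (i : Fin n × Bool).1 =>
          (fun j : {i : Fin n // i ≠ k} => t ⟨(j.val, true), by simpa using j.2⟩) : _) from
        measurable_pi_lambda _ fun j => measurable_pi_apply _)
      (show Measurable (fun s : ∀ i : ({(k, true), (k, false)} : Finset (Fin n × Bool)),
          Z (i : Fin n × Bool).1 =>
          ((s ⟨(k, false), by simp⟩, s ⟨(k, true), by simp⟩) : Z k × Z k)) from
        (measurable_pi_apply _).prodMk (measurable_pi_apply _))
  have hXkY : IndepFun (X k) Y μ := by
    have base := hindep.indepFun_finset
      ({(k, true)} : Finset (Fin n × Bool))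
      (Finset.univ.filter (fun p : Fin n × Bool => p.1 ≠ k))
      (by simp [Finset.disjoint_left]) hξmeas
    exact base.comp
      (show Measurable (fun s : ∀ i : ({(k, true)} : Finset (Fin n × Bool)),
          Z (i : Fin n × Bool).1 => (s ⟨(k, true), by simp⟩ : Z k)) from measurable_pi_apply _)
      (show Measurable (fun t : ∀ i : (Finset.univ.filter (fun p : Fin n × Bool => p.1 ≠ k)),
          Z (i : Fin n × Bool).1 =>
          (fun j : {i : Fin n // i ≠ k} => t ⟨(j.val, true), by simpa using j.2⟩) : _) from
        measurable_pi_lambda _ fun j => measurable_pi_apply _)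
  have hXkΨ : IndepFun (X k) (fun ω => (Y ω, X' k ω)) μ := by
    have base := hindep.indepFun_finset
      ({(k, true)} : Finset (Fin n × Bool))
      (Finset.univ.filter (fun p : Fin n × Bool => p ≠ (k, true)))
      (by simp [Finset.disjoint_left]) hξmeas
    exact base.comp
      (show Measurable (fun s : ∀ i : ({(k, true)} : Finset (Fin n × Bool)),
          Z (i : Fin n × Bool).1 => (s ⟨(k, true), by simp⟩ : Z k)) from measurable_pi_apply _)
      (show Measurable (fun t : ∀ i : (Finset.univ.filter
            (fun p : Fin n × Bool => p ≠ (k, true))), Z (i : Fin n × Bool).1 =>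
          ((fun j : {i : Fin n // i ≠ k} => t ⟨(j.val, true), by simp [Prod.ext_iff, j.2]⟩,
            t ⟨(k, false), by simp⟩) :
            (∀ j : {i : Fin n // i ≠ k}, Z j.val) × Z k)) from
        (measurable_pi_lambda _ fun j => measurable_pi_apply _).prodMk (measurable_pi_apply _))
  have hkk' : IndepFun (X k) (X' k) μ := by
    have h := hindep.indepFun (show ((k, true) : Fin n × Bool) ≠ (k, false) by simp)
    exact h
  -- the two laws agree
  have hmap : Measure.map (fun ω => (Y ω, (X k ω, X' k ω))) μ
      = Measure.map (fun ω => (Y ω, (X' k ω, X k ω))) μ := by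
    have h1 : Measure.map (fun ω => (X k ω, X' k ω)) μ
        = Measure.map (fun ω => (X' k ω, X k ω)) μ := by
      rw [(indepFun_iff_map_prod_eq_prod_map_map (hX k).aemeasurable
            (hX' k).aemeasurable).mp hkk',
          (indepFun_iff_map_prod_eq_prod_map_map (hX' k).aemeasurable
            (hX k).aemeasurable).mp hkk'.symm, (hid k).map_eq]
    rw [(indepFun_iff_map_prod_eq_prod_map_map hYmeas.aemeasurable
          ((hX k).prodMk (hX' k)).aemeasurable).mp hYT,
        (indepFun_iff_map_prod_eq_prod_map_map hYmeas.aemeasurable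
          ((hX' k).prodMk (hX k)).aemeasurable).mp hYT', h1]
  -- master symmetry statement
  have hΦmeas : Measurable (fun ω => (Y ω, (X k ω, X' k ω))) :=
    hYmeas.prodMk ((hX k).prodMk (hX' k))
  have hΦ'meas : Measurable (fun ω => (Y ω, (X' k ω, X k ω))) :=
    hYmeas.prodMk ((hX' k).prodMk (hX k))
  have hkey : ∀ H : (∀ i : {i : Fin n // i ≠ k}, Z i.val) × (Z k × Z k) → ℝ, Measurable H →
      ∫ ω, H (Y ω, (X k ω, X' k ω)) ∂μ = ∫ ω, H (Y ω, (X' k ω, X k ω)) ∂μ := by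
    intro H hH
    rw [← integral_map hΦmeas.aemeasurable hH.aestronglyMeasurable,
        ← integral_map hΦ'meas.aemeasurable hH.aestronglyMeasurable, hmap]
  have hsym : ∀ (B : Set (∀ i : {i : Fin n // i ≠ k}, Z i.val)), MeasurableSet B →
      ∀ (G : ℝ → ℝ → ℝ), Measurable (Function.uncurry G) →
      ∫ ω in Y ⁻¹' B, G (fS ω) (fSk ω) ∂μ = ∫ ω in Y ⁻¹' B, G (fSk ω) (fS ω) ∂μ := by
    intro B hB G hG
    set H : (∀ i : {i : Fin n // i ≠ k}, Z i.val) × (Z k × Z k) → ℝ :=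
      fun w => Set.indicator B (fun _ => (1:ℝ)) w.1 *
        Function.uncurry G (f (recomb k w.1 w.2.1), f (recomb k w.1 w.2.2)) with hH_def
    have hHmeas : Measurable H := by
      apply Measurable.mul
      · exact (measurable_const.indicator hB).comp measurable_fst
      · exact hG.comp (((hf.comp (hrecomb_meas.comp
          (measurable_fst.prodMk (measurable_snd.fst)))).prodMk
          (hf.comp (hrecomb_meas.comp (measurable_fst.prodMk (measurable_snd.snd))))))
    have h1 : ∫ ω in Y ⁻¹' B, G (fS ω) (fSk ω) ∂μ = ∫ ω, H (Y ω, (X k ω, X' k ω)) ∂μ := by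
      rw [← integral_indicator (hYmeas hB)]
      congr 1
      funext ω
      by_cases h : Y ω ∈ B
      · simp only [hH_def, Set.indicator_of_mem h, Set.indicator_of_mem
          (show ω ∈ Y ⁻¹' B from h), Function.uncurry, one_mul]
        rw [hfS_eq ω, hfSk_eq ω]
      · simp only [hH_def, Set.indicator_of_notMem h, Set.indicator_of_notMem
          (show ω ∉ Y ⁻¹' B from h), zero_mul]
    have h2 : ∫ ω in Y ⁻¹' B, G (fSk ω) (fS ω) ∂μ = ∫ ω, H (Y ω, (X' k ω, X k ω)) ∂μ := by
      rw [← integral_indicator (hYmeas hB)]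
      congr 1
      funext ω
      by_cases h : Y ω ∈ B
      · simp only [hH_def, Set.indicator_of_mem h, Set.indicator_of_mem
          (show ω ∈ Y ⁻¹' B from h), Function.uncurry, one_mul]
        rw [hfS_eq ω, hfSk_eq ω]
      · simp only [hH_def, Set.indicator_of_notMem h, Set.indicator_of_notMem
          (show ω ∉ Y ⁻¹' B from h), zero_mul]
    rw [h1, h2, hkey H hHmeas]
  -- integrability facts
  have hfS_int : Integrable fS μ := hL2.integrable one_le_two
  have hΔ_int : Integrable (fun ω => fS ω - fSk ω) μ := hL2k.integrable one_le_two
  have hfSk_int : Integrable fSk μ :=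
    (hfS_int.sub hΔ_int).congr (Filter.Eventually.of_forall fun ω => by
      simp only [Pi.sub_apply]; ring)
  have hΔsq_int : Integrable (fun ω => (fS ω - fSk ω) ^ 2) μ := hL2k.integrable_sq
  haveI hsf0 : SigmaFinite (μ.trim hm0) := by
    have : IsFiniteMeasure (μ.trim hm0) := isFiniteMeasure_trim hm0
    infer_instance
  haveI hsf1 : SigmaFinite (μ.trim hm1) := by
    have : IsFiniteMeasure (μ.trim hm1) := isFiniteMeasure_trim hm1
    infer_instance
  -- symmetry corollaries
  have hsym_base : ∀ s : Set Ω, MeasurableSet[firstCoordsSigma X (k : ℕ)] s →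
      ∫ ω in s, fS ω ∂μ = ∫ ω in s, fSk ω ∂μ := by
    intro s hs
    obtain ⟨B, hB, hBA⟩ := hm0Y s hs
    rw [← hBA]
    exact hsym B hB (fun a _ => a) measurable_fst
  have hsym_exp : ∀ s : Set Ω, MeasurableSet[firstCoordsSigma X (k : ℕ)] s →
      ∫ ω in s, exp (lam * (fS ω - fSk ω) - lam ^ 2 / 2 * (fS ω - fSk ω) ^ 2) ∂μ
      = ∫ ω in s, exp (-(lam * (fS ω - fSk ω)) - lam ^ 2 / 2 * (fS ω - fSk ω) ^ 2) ∂μ := by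
    intro s hs
    obtain ⟨B, hB, hBA⟩ := hm0Y s hs
    rw [← hBA]
    have hGm : Measurable (Function.uncurry
        (fun a b : ℝ => exp (lam * (a - b) - lam ^ 2 / 2 * (a - b) ^ 2))) := by
      have he : Function.uncurry (fun a b : ℝ => exp (lam * (a - b) - lam ^ 2 / 2 * (a - b) ^ 2))
          = fun p : ℝ × ℝ => exp (lam * (p.1 - p.2) - lam ^ 2 / 2 * (p.1 - p.2) ^ 2) := rfl
      rw [he]; fun_prop
    have h := hsym B hB
      (fun a b => exp (lam * (a - b) - lam ^ 2 / 2 * (a - b) ^ 2)) hGm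
    rw [h]
    have he2 : (fun ω => exp (lam * (fSk ω - fS ω) - lam ^ 2 / 2 * (fSk ω - fS ω) ^ 2))
        = (fun ω => exp (-(lam * (fS ω - fSk ω)) - lam ^ 2 / 2 * (fS ω - fSk ω) ^ 2)) := by
      funext ω; congr 1; ring
    rw [← he2]
  -- L1b : conditional expectations of fSk and fS on m0 agree
  have hcondSk0 : μ[fSk|firstCoordsSigma X (k : ℕ)] =ᵐ[μ] μ[fS|firstCoordsSigma X (k : ℕ)] := by
    refine (ae_eq_condExp_of_forall_setIntegral_eq hm0 hfSk_int
      (fun s _ _ => integrable_condExp.integrableOn) (fun s hs _ => ?_)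
      stronglyMeasurable_condExp.aestronglyMeasurable).symm
    rw [setIntegral_condExp hm0 hfS_int hs]
    exact hsym_base s hs
  -- L1a : the set-integral characterization over m1
  have hsetint : ∀ s : Set Ω, MeasurableSet[firstCoordsSigma X ((k : ℕ) + 1)] s →
      ∫ ω in s, (μ[fSk|firstCoordsSigma X (k : ℕ)]) ω ∂μ = ∫ ω in s, fSk ω ∂μ := by
    have hgen : (firstCoordsSigma X ((k : ℕ) + 1) : MeasurableSpace Ω)
        = MeasurableSpace.generateFrom (piiUnionInter
            (fun i : Fin n =>
              {s : Set Ω | MeasurableSet[MeasurableSpace.comap (X i) inferInstance] s})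
            {i : Fin n | (i : ℕ) < (k : ℕ) + 1}) :=
      (generateFrom_piiUnionInter_measurableSet
        (fun i : Fin n => MeasurableSpace.comap (X i) inferInstance)
        {i : Fin n | (i : ℕ) < (k : ℕ) + 1}).symm
    intro s hs
    refine @MeasurableSpace.induction_on_inter Ω (firstCoordsSigma X ((k : ℕ) + 1))
      (fun t _ => ∫ ω in t, (μ[fSk|firstCoordsSigma X (k : ℕ)]) ω ∂μ = ∫ ω in t, fSk ω ∂μ)
      _ hgen
      (isPiSystem_piiUnionInter _
        (fun i => @MeasurableSpace.isPiSystem_measurableSet Ω (MeasurableSpace.comap (X i) inferInstance)) _)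
      (by simp) ?_ ?_ ?_ s hs
    · -- basic case : finite intersections of coordinate preimages
      rintro t ⟨pt, hptS, ft, hft, rfl⟩
      have hBm0 : MeasurableSet[firstCoordsSigma X (k : ℕ)] (⋂ i ∈ pt.erase k, ft i) := by
        refine Finset.measurableSet_biInter _ (fun i hi => ?_)
        have hi1 : i ≠ k := Finset.ne_of_mem_erase hi
        have hi2 : i ∈ pt := Finset.mem_of_mem_erase hi
        have hlt : (i : ℕ) < (k : ℕ) := by
          have h1 : (i : ℕ) < (k : ℕ) + 1 := hptS hi2
          have hne : (i : ℕ) ≠ (k : ℕ) := fun h => hi1 (Fin.ext h)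
          omega
        exact (show MeasurableSpace.comap (X i) inferInstance ≤ firstCoordsSigma X (k : ℕ) from
          le_iSup_of_le i (le_iSup (fun _ : (i : ℕ) < (k : ℕ) =>
          MeasurableSpace.comap (X i) inferInstance) hlt)) _ (hft i hi2)
      by_cases hk : k ∈ pt
      · obtain ⟨Ck, hCk, hCke⟩ := hft k hk
        have hsplit : ⋂ i ∈ pt, ft i = (X k ⁻¹' Ck) ∩ ⋂ i ∈ pt.erase k, ft i := by
          conv_lhs => rw [← Finset.insert_erase hk]
          rw [Finset.set_biInter_insert, hCke]
        rw [hsplit]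
        set B : Set Ω := ⋂ i ∈ pt.erase k, ft i with hB_def
        have hBmeas : MeasurableSet B := hm0 _ hBm0
        have prodInt : ∀ h : Ω → ℝ, Integrable h μ →
            IndepFun (fun ω => Set.indicator Ck (fun _ => (1:ℝ)) (X k ω)) (B.indicator h) μ →
            ∫ ω in (X k ⁻¹' Ck) ∩ B, h ω ∂μ
              = (μ (X k ⁻¹' Ck)).toReal * ∫ ω in B, h ω ∂μ := by
          intro h hint hind2
          have hindic : (fun ω => Set.indicator Ck (fun _ => (1:ℝ)) (X k ω))
              = (X k ⁻¹' Ck).indicator (fun _ => (1:ℝ)) := by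
            funext ω; by_cases h1 : X k ω ∈ Ck <;> simp [h1]
          have heq : Set.indicator ((X k ⁻¹' Ck) ∩ B) h
              = fun ω => (Set.indicator Ck (fun _ => (1:ℝ)) (X k ω)) * (B.indicator h ω) := by
            funext ω
            by_cases h1 : X k ω ∈ Ck <;> by_cases h2 : ω ∈ B <;>
              simp [Set.indicator_apply, Set.mem_inter_iff, h1, h2]
          have hind1_int : Integrable (fun ω => Set.indicator Ck (fun _ => (1:ℝ)) (X k ω)) μ := by
            rw [hindic]
            exact (integrable_const _).indicator (hX k hCk)
          rw [← integral_indicator ((hX k hCk).inter hBmeas), heq,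
            show (fun ω => Set.indicator Ck (fun _ => (1:ℝ)) (X k ω) * B.indicator h ω)
              = ((fun ω => Set.indicator Ck (fun _ => (1:ℝ)) (X k ω)) * B.indicator h) from rfl,
            hind2.integral_mul_eq_mul_integral hind1_int.aestronglyMeasurable
              (hint.indicator hBmeas).aestronglyMeasurable]
          congr 1
          · rw [hindic, integral_indicator (hX k hCk)]
            simp; rfl
          · rw [integral_indicator hBmeas]
        obtain ⟨B', hB', hB'e⟩ := hm0Y B hBm0
        have hindA : IndepFun (fun ω => Set.indicator Ck (fun _ => (1:ℝ)) (X k ω))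
            (B.indicator fSk) μ := by
          have hcomp : B.indicator fSk
              = (fun w : (∀ i : {i : Fin n // i ≠ k}, Z i.val) × Z k =>
                  Set.indicator B' (fun _ => (1:ℝ)) w.1 * f (recomb k w.1 w.2))
                ∘ (fun ω => (Y ω, X' k ω)) := by
            funext ω
            by_cases h2 : ω ∈ B
            · have h2' : Y ω ∈ B' := by rw [← hB'e] at h2; exact h2
              simp [Set.indicator_of_mem, h2, h2', Function.comp, hfSk_eq ω]
            · have h2' : Y ω ∉ B' := by rw [← hB'e] at h2; exact h2
              simp [Set.indicator_of_notMem, h2, h2', Function.comp]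
          rw [hcomp, show (fun ω => Set.indicator Ck (fun _ => (1:ℝ)) (X k ω))
              = (fun a => Set.indicator Ck (fun _ => (1:ℝ)) a) ∘ (X k) from rfl]
          exact hXkΨ.comp (measurable_const.indicator hCk)
            (((measurable_const.indicator hB').comp measurable_fst).mul
              (hf.comp hrecomb_meas))
        have hindB : IndepFun (fun ω => Set.indicator Ck (fun _ => (1:ℝ)) (X k ω))
            (B.indicator (μ[fSk|firstCoordsSigma X (k : ℕ)])) μ := by
          have hsm : StronglyMeasurable[firstCoordsSigma X (k : ℕ)]
              (B.indicator (μ[fSk|firstCoordsSigma X (k : ℕ)])) :=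
            stronglyMeasurable_condExp.indicator hBm0
          have h1 : MeasurableSpace.comap (fun ω => Set.indicator Ck (fun _ => (1:ℝ)) (X k ω))
              inferInstance ≤ MeasurableSpace.comap (X k) inferInstance := by
            rw [show (fun ω => Set.indicator Ck (fun _ => (1:ℝ)) (X k ω))
                = (fun a => Set.indicator Ck (fun _ => (1:ℝ)) a) ∘ (X k) from rfl,
              ← MeasurableSpace.comap_comp]
            exact MeasurableSpace.comap_mono (measurable_const.indicator hCk).comap_le
          have h2 : MeasurableSpace.comap (B.indicator (μ[fSk|firstCoordsSigma X (k : ℕ)]))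
              inferInstance ≤ MeasurableSpace.comap Y MeasurableSpace.pi :=
            le_trans hsm.measurable.comap_le hm0Y
          exact indep_of_indep_of_le_right (indep_of_indep_of_le_left hXkY h1) h2
        rw [prodInt fSk hfSk_int hindA, prodInt _ integrable_condExp hindB,
          setIntegral_condExp hm0 hfSk_int hBm0]
      · have hBm0' : MeasurableSet[firstCoordsSigma X (k : ℕ)] (⋂ i ∈ pt, ft i) := by
          rw [← Finset.erase_eq_of_notMem hk]; exact hBm0
        exact setIntegral_condExp hm0 hfSk_int hBm0'
    · -- complement case
      intro t ht hC
      rw [setIntegral_compl (hm1 _ ht) integrable_condExp,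
        setIntegral_compl (hm1 _ ht) hfSk_int, hC, integral_condExp hm0]
    · -- disjoint union case
      intro g hd hgm hC
      rw [integral_iUnion (fun i => hm1 _ (hgm i)) hd integrable_condExp.integrableOn,
        integral_iUnion (fun i => hm1 _ (hgm i)) hd hfSk_int.integrableOn]
      exact tsum_congr hC
  have hcondSk1 : μ[fSk|firstCoordsSigma X ((k : ℕ) + 1)]
      =ᵐ[μ] μ[fSk|firstCoordsSigma X (k : ℕ)] := by
    refine (ae_eq_condExp_of_forall_setIntegral_eq hm1 hfSk_int
      (fun s _ _ => integrable_condExp.integrableOn)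
      (fun s hs _ => hsetint s hs)
      ((stronglyMeasurable_condExp.mono hm01).aestronglyMeasurable)).symm
  -- the exponent function
  set g : Ω → ℝ := fun ω => lam * (fS ω - fSk ω) - lam ^ 2 / 2 * (fS ω - fSk ω) ^ 2 with hg_def
  have hΔmeas : Measurable (fun ω => fS ω - fSk ω) := hfSmeas.sub hfSkmeas
  have hg_meas : Measurable g := (hΔmeas.const_mul lam).sub
    ((hΔmeas.pow_const 2).const_mul (lam ^ 2 / 2))
  have hg_le : ∀ ω, g ω ≤ 1 / 2 := by
    intro ω
    have h := sq_nonneg (lam * (fS ω - fSk ω) - 1)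
    rw [hg_def]
    nlinarith [h]
  have hg_int : Integrable g μ := by
    have h := (hΔ_int.const_mul lam).sub (hΔsq_int.const_mul (lam ^ 2 / 2))
    exact h.congr (Filter.Eventually.of_forall fun ω => by simp [Pi.sub_apply, hg_def])
  have hexpg_int : Integrable (fun ω => exp (g ω)) μ := by
    refine (integrable_const (exp (1 / 2))).mono'
      (Real.measurable_exp.comp hg_meas).aestronglyMeasurable ?_
    refine Filter.Eventually.of_forall fun ω => ?_
    rw [Real.norm_eq_abs, abs_of_pos (exp_pos _)]
    exact exp_le_exp.mpr (hg_le ω)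
  have hjensen := condexp_exp_jensen hm1 hg_int hexpg_int
  have hcond_nonneg : 0 ≤ᵐ[μ] μ[fun ω => exp (g ω)|firstCoordsSigma X ((k : ℕ) + 1)] :=
    condExp_nonneg (Filter.Eventually.of_forall fun ω => (exp_pos _).le)
  -- identify the exponent with the conditional expectation of g
  have e1 : μ[g|firstCoordsSigma X ((k : ℕ) + 1)] =ᵐ[μ]
      μ[(fun ω => lam * (fS ω - fSk ω))|firstCoordsSigma X ((k : ℕ) + 1)]
      - μ[(fun ω => lam ^ 2 / 2 * (fS ω - fSk ω) ^ 2)|firstCoordsSigma X ((k : ℕ) + 1)] :=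
    condExp_sub (hΔ_int.const_mul lam) (hΔsq_int.const_mul (lam ^ 2 / 2)) _
  have e2 : μ[(fun ω => fS ω - fSk ω)|firstCoordsSigma X ((k : ℕ) + 1)] =ᵐ[μ]
      μ[fS|firstCoordsSigma X ((k : ℕ) + 1)] - μ[fSk|firstCoordsSigma X ((k : ℕ) + 1)] :=
    condExp_sub hfS_int hfSk_int _
  have e3 : μ[(fun ω => lam * (fS ω - fSk ω))|firstCoordsSigma X ((k : ℕ) + 1)] =ᵐ[μ]
      lam • μ[(fun ω => fS ω - fSk ω)|firstCoordsSigma X ((k : ℕ) + 1)] :=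
    condExp_smul lam (fun ω => fS ω - fSk ω) _
  have e4 : μ[(fun ω => lam ^ 2 / 2 * (fS ω - fSk ω) ^ 2)|firstCoordsSigma X ((k : ℕ) + 1)]
      =ᵐ[μ] (lam ^ 2 / 2) • μ[(fun ω => (fS ω - fSk ω) ^ 2)|firstCoordsSigma X ((k : ℕ) + 1)] :=
    condExp_smul (lam ^ 2 / 2) (fun ω => (fS ω - fSk ω) ^ 2) _
  have e5 : μ[fSk|firstCoordsSigma X ((k : ℕ) + 1)] =ᵐ[μ] μ[fS|firstCoordsSigma X (k : ℕ)] :=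
    hcondSk1.trans hcondSk0
  have hDkV : (fun ω => lam * ((μ[fS|firstCoordsSigma X ((k : ℕ) + 1)]) ω
        - (μ[fS|firstCoordsSigma X (k : ℕ)]) ω)
      - lam ^ 2 / 2 * (μ[(fun ω' => (fS ω' - fSk ω') ^ 2)|firstCoordsSigma X ((k : ℕ) + 1)]) ω)
      =ᵐ[μ] μ[g|firstCoordsSigma X ((k : ℕ) + 1)] := by
    filter_upwards [e1, e2, e3, e4, e5] with ω h1 h2 h3 h4 h5
    rw [h1]
    simp only [Pi.sub_apply, Pi.smul_apply, smul_eq_mul] at h2 h3 h4 h5 ⊢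
    rw [h3, h4, h2, h5]
  -- the symmetrized integrand and the cosh bound
  have hA1 : MeasurableSet[firstCoordsSigma X ((k : ℕ) + 1)] A := hm01 _ hA
  have hAamb : MeasurableSet A := hm0 _ hA
  have hgm_meas : Measurable (fun ω =>
      exp (-(lam * (fS ω - fSk ω)) - lam ^ 2 / 2 * (fS ω - fSk ω) ^ 2)) :=
    Real.measurable_exp.comp (((hΔmeas.const_mul lam).neg).sub
      ((hΔmeas.pow_const 2).const_mul (lam ^ 2 / 2)))
  have hgm_int : Integrable (fun ω =>
      exp (-(lam * (fS ω - fSk ω)) - lam ^ 2 / 2 * (fS ω - fSk ω) ^ 2)) μ := by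
    refine (integrable_const (exp (1 / 2))).mono' hgm_meas.aestronglyMeasurable ?_
    refine Filter.Eventually.of_forall fun ω => ?_
    rw [Real.norm_eq_abs, abs_of_pos (exp_pos _)]
    refine exp_le_exp.mpr ?_
    nlinarith [sq_nonneg (lam * (fS ω - fSk ω) + 1)]
  have habc : ∀ a b : ℝ, (exp (a - b) + exp (-a - b)) / 2 = cosh a * exp (-b) := by
    intro a b
    rw [Real.cosh_eq, show a - b = a + -b from by ring, show -a - b = -a + -b from by ring,
      Real.exp_add, Real.exp_add]
    ring
  have havg : ∫ ω in A, exp (g ω) ∂μ = ∫ ω in A,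
      cosh (lam * (fS ω - fSk ω)) * exp (-(lam ^ 2 / 2 * (fS ω - fSk ω) ^ 2)) ∂μ := by
    have h0 : ∫ ω in A, exp (g ω) ∂μ = ∫ ω in A,
        exp (-(lam * (fS ω - fSk ω)) - lam ^ 2 / 2 * (fS ω - fSk ω) ^ 2) ∂μ :=
      hsym_exp A hA
    have h1 : ∫ ω in A, exp (g ω) ∂μ = (∫ ω in A, exp (g ω) ∂μ + ∫ ω in A,
        exp (-(lam * (fS ω - fSk ω)) - lam ^ 2 / 2 * (fS ω - fSk ω) ^ 2) ∂μ) / 2 := by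
      rw [← h0]; ring
    rw [h1, ← integral_add hexpg_int.integrableOn hgm_int.integrableOn, ← integral_div]
    congr 1
    funext ω
    have := habc (lam * (fS ω - fSk ω)) (lam ^ 2 / 2 * (fS ω - fSk ω) ^ 2)
    rw [hg_def]
    exact this
  have hcosh_le : ∀ ω, cosh (lam * (fS ω - fSk ω))
      * exp (-(lam ^ 2 / 2 * (fS ω - fSk ω) ^ 2)) ≤ 1 := by
    intro ω
    have h1 := Real.cosh_le_exp_half_sq (lam * (fS ω - fSk ω))
    have h2 : (0:ℝ) ≤ exp (-(lam ^ 2 / 2 * (fS ω - fSk ω) ^ 2)) := (exp_pos _).le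
    calc cosh (lam * (fS ω - fSk ω)) * exp (-(lam ^ 2 / 2 * (fS ω - fSk ω) ^ 2))
        ≤ exp ((lam * (fS ω - fSk ω)) ^ 2 / 2)
          * exp (-(lam ^ 2 / 2 * (fS ω - fSk ω) ^ 2)) := mul_le_mul_of_nonneg_right h1 h2
      _ = exp ((lam * (fS ω - fSk ω)) ^ 2 / 2 + -(lam ^ 2 / 2 * (fS ω - fSk ω) ^ 2)) :=
          (Real.exp_add _ _).symm
      _ = 1 := by
          rw [show (lam * (fS ω - fSk ω)) ^ 2 / 2 + -(lam ^ 2 / 2 * (fS ω - fSk ω) ^ 2) = 0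
            from by ring, Real.exp_zero]
  have hcosh_meas : Measurable (fun ω => cosh (lam * (fS ω - fSk ω))
      * exp (-(lam ^ 2 / 2 * (fS ω - fSk ω) ^ 2))) :=
    (Real.continuous_cosh.measurable.comp (hΔmeas.const_mul lam)).mul
      (Real.measurable_exp.comp (((hΔmeas.pow_const 2).const_mul (lam ^ 2 / 2)).neg))
  have hcosh_int : Integrable (fun ω => cosh (lam * (fS ω - fSk ω))
      * exp (-(lam ^ 2 / 2 * (fS ω - fSk ω) ^ 2))) μ := by
    refine (integrable_const (1:ℝ)).mono' hcosh_meas.aestronglyMeasurable ?_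
    refine Filter.Eventually.of_forall fun ω => ?_
    rw [Real.norm_eq_abs, abs_of_nonneg (mul_nonneg (Real.cosh_pos _).le (exp_pos _).le)]
    exact hcosh_le ω
  have hfinal : ∫ ω in A, exp (g ω) ∂μ ≤ (μ A).toReal := by
    rw [havg]
    calc ∫ ω in A, cosh (lam * (fS ω - fSk ω))
          * exp (-(lam ^ 2 / 2 * (fS ω - fSk ω) ^ 2)) ∂μ
        ≤ ∫ _ in A, (1:ℝ) ∂μ := by
          refine setIntegral_mono_on hcosh_int.integrableOn
            (integrableOn_const (measure_ne_top μ A)) hAamb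
            (fun ω _ => hcosh_le ω)
      _ = (μ A).toReal := by rw [setIntegral_const, smul_eq_mul, mul_one]; rfl
  -- final chain
  show ∫⁻ ω in A, ENNReal.ofReal (exp (lam * ((μ[fS|firstCoordsSigma X ((k : ℕ) + 1)]) ω
      - (μ[fS|firstCoordsSigma X (k : ℕ)]) ω)
      - lam ^ 2 / 2 * (μ[(fun ω' => (fS ω' - fSk ω') ^ 2)|
          firstCoordsSigma X ((k : ℕ) + 1)]) ω)) ∂μ ≤ μ A
  calc ∫⁻ ω in A, ENNReal.ofReal (exp (lam * ((μ[fS|firstCoordsSigma X ((k : ℕ) + 1)]) ω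
        - (μ[fS|firstCoordsSigma X (k : ℕ)]) ω)
        - lam ^ 2 / 2 * (μ[(fun ω' => (fS ω' - fSk ω') ^ 2)|
            firstCoordsSigma X ((k : ℕ) + 1)]) ω)) ∂μ
      = ∫⁻ ω in A, ENNReal.ofReal (exp ((μ[g|firstCoordsSigma X ((k : ℕ) + 1)]) ω)) ∂μ :=
        lintegral_congr_ae (ae_restrict_of_ae (hDkV.fun_comp (fun t => ENNReal.ofReal (exp t))))
    _ ≤ ∫⁻ ω in A, ENNReal.ofReal ((μ[(fun ω => exp (g ω))|
          firstCoordsSigma X ((k : ℕ) + 1)]) ω) ∂μ :=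
        lintegral_mono_ae (ae_restrict_of_ae (hjensen.mono fun ω h =>
          ENNReal.ofReal_le_ofReal h))
    _ = ENNReal.ofReal (∫ ω in A, (μ[(fun ω => exp (g ω))|
          firstCoordsSigma X ((k : ℕ) + 1)]) ω ∂μ) :=
        (ofReal_integral_eq_lintegral_ofReal integrable_condExp.integrableOn
          (ae_restrict_of_ae hcond_nonneg)).symm
    _ = ENNReal.ofReal (∫ ω in A, exp (g ω) ∂μ) := by
        rw [setIntegral_condExp hm1 hexpg_int hA1]
    _ ≤ ENNReal.ofReal ((μ A).toReal) := ENNReal.ofReal_le_ofReal hfinal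
    _ ≤ μ A := ENNReal.ofReal_toReal_le

/-- for each `k` and every `λ ∈ ℝ`,
`E[exp(λ D_k − (λ²/2) V_k) | X₁, …, X_{k−1}] ≤ 1` almost surely, expressed through the
defining property of conditional expectation: for every set `A` measurable w.r.t.
`σ(X₁, …, X_{k−1})`, the integral of `exp(λ D_k − (λ²/2) V_k)` over `A` is at most `μ A`. -/
theorem stmt0
    {Ω : Type*} [MeasurableSpace Ω] {μ : Measure Ω} [IsProbabilityMeasure μ]
    {n : ℕ} {Z : Fin n → Type*} [∀ i, MeasurableSpace (Z i)]
    (X X' : ∀ i, Ω → Z i)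
    (hX : ∀ i, Measurable (X i)) (hX' : ∀ i, Measurable (X' i))
    -- the 2n components (X₁,…,Xₙ,X₁′,…,Xₙ′) are mutually independent
    (hindep : iIndepFun
      (fun p : Fin n × Bool => if p.2 then X p.1 else X' p.1) μ)
    -- S′ is a copy of S
    (hid : ∀ i, IdentDistrib (X' i) (X i) μ μ)
    (f : (∀ i, Z i) → ℝ) (hf : Measurable f)
    (S : Ω → ∀ i, Z i) (hS : S = fun ω i => X i ω)
    (Sk : Fin n → Ω → ∀ i, Z i)
    (hSk : Sk = fun k ω => Function.update (fun i => X i ω) k (X' k ω))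
    -- square integrability assumptions
    (hL2 : MemLp (fun ω => f (S ω)) 2 μ)
    (hL2k : ∀ k, MemLp (fun ω => f (S ω) - f (Sk k ω)) 2 μ)
    -- Doob martingale differences (0-based: `D k` is the (k+1)-th difference)
    (D : Fin n → Ω → ℝ)
    (hD : D = fun (k : Fin n) ω => (μ[fun ω' => f (S ω') | firstCoordsSigma X ((k : ℕ) + 1)]) ω
      - (μ[fun ω' => f (S ω') | firstCoordsSigma X (k : ℕ)]) ω)
    (Vk : Fin n → Ω → ℝ)
    (hVk : Vk = fun (k : Fin n) ω =>
      (μ[fun ω' => (f (S ω') - f (Sk k ω')) ^ 2 | firstCoordsSigma X ((k : ℕ) + 1)]) ω)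
    (k : Fin n) (lam : ℝ) :
    ∀ A : Set Ω, MeasurableSet[firstCoordsSigma X (k : ℕ)] A →
      ∫⁻ ω in A, ENNReal.ofReal (exp (lam * D k ω - lam ^ 2 / 2 * Vk k ω)) ∂μ ≤ μ A := by
  intro A hA
  subst hS hSk hD hVk
  exact main_aux X X' hX hX' hindep hid f hf k lam hL2 (hL2k k) A hA
end

section
/- For any y > 0 one has E[ (y / √(y² + E[V_θ | S])) · exp( E[Δ_θ | S]² / (2 (y² + E[V_θ | S])) − KL(p̂_S ‖ p⁰) ) ] ≤ 1. -/
set_option autoImplicit false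
open MeasureTheory ProbabilityTheory Real
open scoped ENNReal

lemma gauss_lin_int {a : ℝ} (δ : ℝ) (ha : 0 < a) :
    Integrable (fun t : ℝ => exp (-a * t ^ 2 + δ * t)) := by
  have h : ∀ t : ℝ, -a * t ^ 2 + δ * t
      = δ ^ 2 / (4 * a) + (-a * (t - δ / (2 * a)) ^ 2) := by
    intro t; field_simp; ring
  simp_rw [h, exp_add]
  exact ((integrable_exp_neg_mul_sq ha).comp_sub_right (δ / (2 * a))).const_mul _

lemma gauss_lin {a : ℝ} (δ : ℝ) (ha : 0 < a) :
    ∫ t : ℝ, exp (-a * t ^ 2 + δ * t) = sqrt (π / a) * exp (δ ^ 2 / (4 * a)) := by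
  have h : ∀ t : ℝ, -a * t ^ 2 + δ * t
      = δ ^ 2 / (4 * a) + (-a * (t - δ / (2 * a)) ^ 2) := by
    intro t; field_simp; ring
  simp_rw [h, exp_add, integral_const_mul]
  rw [integral_sub_right_eq_self (fun t => exp (-a * t ^ 2)) (δ / (2 * a)),
    integral_gaussian, mul_comm]

lemma gauss_exp_eq {y v : ℝ} (δ t : ℝ) :
    (y / sqrt (2*π)) * exp (-(y^2/2) * t^2) * exp (t*δ - t^2/2*v)
      = (y / sqrt (2*π)) * exp (-((y^2+v)/2) * t^2 + δ * t) := by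
  rw [mul_assoc, ← exp_add]; ring_nf

lemma gauss_formula_int {y : ℝ} (hy : 0 < y) {v : ℝ} (hv : 0 ≤ v) (δ : ℝ) :
    Integrable (fun t : ℝ => (y / sqrt (2*π)) * exp (-(y^2/2) * t^2) * exp (t*δ - t^2/2*v)) := by
  have ha : 0 < (y^2+v)/2 := by positivity
  simp_rw [gauss_exp_eq]
  exact (gauss_lin_int δ ha).const_mul _

lemma gauss_formula {y : ℝ} (hy : 0 < y) {v : ℝ} (hv : 0 ≤ v) (δ : ℝ) :
    ∫ t : ℝ, (y / sqrt (2*π)) * exp (-(y^2/2) * t^2) * exp (t*δ - t^2/2*v)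
      = (y / sqrt (y^2+v)) * exp (δ^2/(2*(y^2+v))) := by
  have ha : 0 < (y^2+v)/2 := by positivity
  have h2π : (0:ℝ) < 2*π := by positivity
  have hyv : (0:ℝ) < y^2+v := by positivity
  simp_rw [gauss_exp_eq]
  rw [integral_const_mul, gauss_lin δ ha,
    show π / ((y^2+v)/2) = (2*π)/(y^2+v) by field_simp,
    Real.sqrt_div h2π.le,
    show δ^2/(4*((y^2+v)/2)) = δ^2/(2*(y^2+v)) by ring]
  have hs : sqrt (2*π) ≠ 0 := by positivity
  field_simp

lemma dv {Θ : Type*} [MeasurableSpace Θ] {ν p0 : Measure Θ} [IsProbabilityMeasure ν]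
    [IsProbabilityMeasure p0] (hac : ν ≪ p0) {f : Θ → ℝ} (hfm : Measurable f)
    (hf : Integrable f ν)
    (hg : Integrable (fun ϑ => log ((ν.rnDeriv p0) ϑ).toReal) ν) :
    ENNReal.ofReal (exp ((∫ ϑ, f ϑ ∂ν) - ∫ ϑ, log ((ν.rnDeriv p0) ϑ).toReal ∂ν))
      ≤ ∫⁻ ϑ, ENNReal.ofReal (exp (f ϑ)) ∂p0 := by
  set g : Θ → ℝ := fun ϑ => log ((ν.rnDeriv p0) ϑ).toReal with hgdef
  have hgm : Measurable g := (Measure.measurable_rnDeriv ν p0).ennreal_toReal.log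
  -- change of measure step
  have hA : ∫⁻ ϑ, ENNReal.ofReal (exp (f ϑ - g ϑ)) ∂ν
      ≤ ∫⁻ ϑ, ENNReal.ofReal (exp (f ϑ)) ∂p0 := by
    rw [← MeasureTheory.lintegral_rnDeriv_mul hac
      (f := fun ϑ => ENNReal.ofReal (exp (f ϑ - g ϑ)))
      (((hfm.sub hgm).exp).ennreal_ofReal).aemeasurable]
    refine lintegral_mono_ae ?_
    filter_upwards [Measure.rnDeriv_lt_top ν p0] with ϑ hϑ
    rcases eq_or_ne ((ν.rnDeriv p0) ϑ) 0 with h0 | h0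
    · simp [h0]
    · have ht : 0 < ((ν.rnDeriv p0) ϑ).toReal := ENNReal.toReal_pos h0 hϑ.ne
      have hfg : exp (f ϑ - g ϑ) = exp (f ϑ) * (((ν.rnDeriv p0) ϑ).toReal)⁻¹ := by
        rw [hgdef, exp_sub, exp_log ht, div_eq_mul_inv]
      calc (ν.rnDeriv p0) ϑ * ENNReal.ofReal (exp (f ϑ - g ϑ))
          = ENNReal.ofReal (((ν.rnDeriv p0) ϑ).toReal
              * (exp (f ϑ) * (((ν.rnDeriv p0) ϑ).toReal)⁻¹)) := by
            rw [hfg, ENNReal.ofReal_mul ENNReal.toReal_nonneg, ENNReal.ofReal_toReal hϑ.ne]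
        _ ≤ ENNReal.ofReal (exp (f ϑ)) := le_of_eq (by congr 1; field_simp)
  rcases eq_or_ne (∫⁻ ϑ, ENNReal.ofReal (exp (f ϑ - g ϑ)) ∂ν) ⊤ with hI | hI
  · exact le_top.trans (hI ▸ hA)
  · have hint : Integrable (fun ϑ => exp (f ϑ - g ϑ)) ν := by
      refine ⟨((hfm.sub hgm).exp).aestronglyMeasurable, ?_⟩
      rw [hasFiniteIntegral_iff_ofReal (ae_of_all _ fun _ => (exp_pos _).le)]
      exact lt_top_iff_ne_top.mpr hI
    have hjensen : exp (∫ ϑ, (f ϑ - g ϑ) ∂ν) ≤ ∫ ϑ, exp (f ϑ - g ϑ) ∂ν := by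
      have := convexOn_exp.map_integral_le (continuous_exp.continuousOn)
        isClosed_univ (ae_of_all _ fun _ => Set.mem_univ _) (hf.sub hg) ?_
      · exact this
      · exact hint
    calc ENNReal.ofReal (exp ((∫ ϑ, f ϑ ∂ν) - ∫ ϑ, g ϑ ∂ν))
        = ENNReal.ofReal (exp (∫ ϑ, (f ϑ - g ϑ) ∂ν)) := by rw [integral_sub hf hg]
      _ ≤ ENNReal.ofReal (∫ ϑ, exp (f ϑ - g ϑ) ∂ν) := ENNReal.ofReal_le_ofReal hjensen
      _ = ∫⁻ ϑ, ENNReal.ofReal (exp (f ϑ - g ϑ)) ∂ν :=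
          ofReal_integral_eq_lintegral_ofReal hint (ae_of_all _ fun _ => (exp_pos _).le)
      _ ≤ _ := hA

/-- for a canonical family `(Δ_ϑ, √V_ϑ)` and a posterior kernel `p̂`, for any
`y > 0`, `E[(y/√(y² + E[V_θ|S])) exp(E[Δ_θ|S]²/(2(y² + E[V_θ|S])) − KL(p̂_S‖p⁰))] ≤ 1`,
where `E[Δ_θ|S](ω) = ∫ Δ(ϑ,ω) p̂_{S ω}(dϑ)` and similarly for `V`. -/
theorem stmt5
    {Ω Z Θ : Type*} [MeasurableSpace Ω] [MeasurableSpace Z] [MeasurableSpace Θ]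
    {μ : Measure Ω} [IsProbabilityMeasure μ]
    (S : Ω → Z) (hS : Measurable S)
    (Δ V : Θ → Ω → ℝ)
    (hΔ : Measurable (Function.uncurry Δ)) (hVmeas : Measurable (Function.uncurry V))
    (hV0 : ∀ ϑ ω, 0 ≤ V ϑ ω)
    -- each pair `(Δ_ϑ, √V_ϑ)` is a canonical pair
    (hcanon : ∀ ϑ, ∀ lam : ℝ,
      ∫⁻ ω, ENNReal.ofReal (exp (lam * Δ ϑ ω - lam ^ 2 / 2 * V ϑ ω)) ∂μ ≤ 1)
    (phat : Kernel Z Θ) [IsMarkovKernel phat]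
    (p0 : Measure Θ) [IsProbabilityMeasure p0]
    -- a.s. absolute continuity and a.s. finiteness of the KL divergence
    (hac : ∀ᵐ ω ∂μ, phat (S ω) ≪ p0)
    (hKLint : ∀ᵐ ω ∂μ,
      Integrable (fun ϑ => log ((phat (S ω)).rnDeriv p0 ϑ).toReal) (phat (S ω)))
    (KL : Ω → ℝ)
    (hKL : KL = fun ω => ∫ ϑ, log ((phat (S ω)).rnDeriv p0 ϑ).toReal ∂(phat (S ω)))
    -- `E[Δ_θ | S]` and `E[V_θ | S]` are well defined and finite
    (hΔint : ∀ᵐ ω ∂μ, Integrable (fun ϑ => Δ ϑ ω) (phat (S ω)))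
    (hVint : ∀ᵐ ω ∂μ, Integrable (fun ϑ => V ϑ ω) (phat (S ω)))
    (Dbar Vbar : Ω → ℝ)
    (hDbar : Dbar = fun ω => ∫ ϑ, Δ ϑ ω ∂(phat (S ω)))
    (hVbar : Vbar = fun ω => ∫ ϑ, V ϑ ω ∂(phat (S ω)))
    (y : ℝ) (hy : 0 < y) :
    ∫⁻ ω, ENNReal.ofReal ((y / sqrt (y ^ 2 + Vbar ω)) *
        exp (Dbar ω ^ 2 / (2 * (y ^ 2 + Vbar ω)) - KL ω)) ∂μ ≤ 1 := by
  
  subst hKL hDbar hVbar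
  set c : ℝ → ℝ := fun t => y / sqrt (2 * π) * exp (-(y ^ 2 / 2) * t ^ 2) with hcdef
  have hcnn : ∀ t, 0 ≤ c t := fun t => by positivity
  have hcm : Measurable c := by fun_prop
  set E : ℝ → Θ → Ω → ℝ≥0∞ :=
    fun t ϑ ω => ENNReal.ofReal (exp (t * Δ ϑ ω - t ^ 2 / 2 * V ϑ ω)) with hEdef
  -- joint measurability of E
  have hΔ' : Measurable fun p : (Ω × ℝ) × Θ => Δ p.2 p.1.1 :=
    hΔ.comp (measurable_snd.prodMk (measurable_fst.comp measurable_fst))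
  have hV' : Measurable fun p : (Ω × ℝ) × Θ => V p.2 p.1.1 :=
    hVmeas.comp (measurable_snd.prodMk (measurable_fst.comp measurable_fst))
  have ht' : Measurable fun p : (Ω × ℝ) × Θ => p.1.2 := measurable_snd.comp measurable_fst
  have hE' : Measurable fun p : (Ω × ℝ) × Θ => E p.1.2 p.2 p.1.1 :=
    (((ht'.mul hΔ').sub (((ht'.pow_const 2).div_const 2).mul hV')).exp).ennreal_ofReal
  have hG : Measurable fun p : Ω × ℝ => ∫⁻ ϑ, E p.2 ϑ p.1 ∂p0 :=
    hE'.lintegral_prod_right'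
  -- the key pointwise (a.e.) bound
  have key : ∀ᵐ ω ∂μ,
      ENNReal.ofReal ((y / sqrt (y ^ 2 + (∫ ϑ, V ϑ ω ∂(phat (S ω))))) *
        exp ((∫ ϑ, Δ ϑ ω ∂(phat (S ω))) ^ 2 / (2 * (y ^ 2 + (∫ ϑ, V ϑ ω ∂(phat (S ω)))))
          - ∫ ϑ, log ((phat (S ω)).rnDeriv p0 ϑ).toReal ∂(phat (S ω))))
      ≤ ∫⁻ t, ENNReal.ofReal (c t) * ∫⁻ ϑ, E t ϑ ω ∂p0 ∂(volume) := by
    filter_upwards [hac, hKLint, hΔint, hVint] with ω hacω hKω hΔω hVω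
    set ν := phat (S ω) with hν
    set D := ∫ ϑ, Δ ϑ ω ∂ν with hD
    set Vb := ∫ ϑ, V ϑ ω ∂ν with hVb
    set K := ∫ ϑ, log (ν.rnDeriv p0 ϑ).toReal ∂ν with hK
    have hVb0 : 0 ≤ Vb := integral_nonneg fun ϑ => hV0 ϑ ω
    have e1 : ∀ t : ℝ, c t * exp (t * D - t ^ 2 / 2 * Vb - K)
        = (c t * exp (t * D - t ^ 2 / 2 * Vb)) * exp (-K) := by
      intro t
      have h : exp (t * D - t ^ 2 / 2 * Vb - K)
          = exp (t * D - t ^ 2 / 2 * Vb) * exp (-K) := by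
        rw [← exp_add, sub_eq_add_neg]
      rw [h]; exact (mul_assoc _ _ _).symm
    have hT : (y / sqrt (y ^ 2 + Vb)) * exp (D ^ 2 / (2 * (y ^ 2 + Vb)) - K)
        = ∫ t, c t * exp (t * D - t ^ 2 / 2 * Vb - K) := by
      simp_rw [e1]
      rw [integral_mul_const, gauss_formula hy hVb0 D]
      have h : exp (D ^ 2 / (2 * (y ^ 2 + Vb)) - K)
          = exp (D ^ 2 / (2 * (y ^ 2 + Vb))) * exp (-K) := by
        rw [← exp_add, sub_eq_add_neg]
      rw [h]; exact (mul_assoc _ _ _).symm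
    have hint : Integrable (fun t => c t * exp (t * D - t ^ 2 / 2 * Vb - K)) := by
      simp_rw [e1]
      exact (gauss_formula_int hy hVb0 D).mul_const _
    rw [hT, ofReal_integral_eq_lintegral_ofReal hint
      (ae_of_all _ fun t => mul_nonneg (hcnn t) (exp_pos _).le)]
    refine lintegral_mono fun t => ?_
    rw [ENNReal.ofReal_mul (hcnn t)]
    refine mul_le_mul_right ?_ _
    -- Donsker–Varadhan step
    have hfm : Measurable fun ϑ => t * Δ ϑ ω - t ^ 2 / 2 * V ϑ ω := by
      have h1 : Measurable fun ϑ => Δ ϑ ω :=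
        hΔ.comp (measurable_id.prodMk measurable_const)
      have h2 : Measurable fun ϑ => V ϑ ω :=
        hVmeas.comp (measurable_id.prodMk measurable_const)
      exact (h1.const_mul t).sub (h2.const_mul _)
    have hfi : Integrable (fun ϑ => t * Δ ϑ ω - t ^ 2 / 2 * V ϑ ω) ν :=
      (hΔω.const_mul t).sub (hVω.const_mul _)
    have hDV := dv hacω hfm hfi hKω
    have hintf : ∫ ϑ, (t * Δ ϑ ω - t ^ 2 / 2 * V ϑ ω) ∂ν = t * D - t ^ 2 / 2 * Vb := by
      rw [integral_sub (hΔω.const_mul t) (hVω.const_mul _), integral_const_mul,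
        integral_const_mul]
    rw [hintf] at hDV
    exact hDV
  have hEt : ∀ t : ℝ, Measurable fun p : Ω × Θ => E t p.2 p.1 := by
    intro t
    have h1 : Measurable fun p : Ω × Θ => Δ p.2 p.1 :=
      hΔ.comp (measurable_snd.prodMk measurable_fst)
    have h2 : Measurable fun p : Ω × Θ => V p.2 p.1 :=
      hVmeas.comp (measurable_snd.prodMk measurable_fst)
    exact (((h1.const_mul t).sub (h2.const_mul (t ^ 2 / 2))).exp).ennreal_ofReal
  refine le_trans (lintegral_mono_ae key) ?_
  have swap1 : ∫⁻ ω, ∫⁻ t, ENNReal.ofReal (c t) * ∫⁻ ϑ, E t ϑ ω ∂p0 ∂(volume) ∂μ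
      = ∫⁻ t, ∫⁻ ω, ENNReal.ofReal (c t) * ∫⁻ ϑ, E t ϑ ω ∂p0 ∂μ ∂(volume) :=
    lintegral_lintegral_swap (((hcm.comp measurable_snd).ennreal_ofReal.mul hG).aemeasurable)
  rw [swap1]
  have step2 : ∀ t : ℝ, ∫⁻ ω, ENNReal.ofReal (c t) * ∫⁻ ϑ, E t ϑ ω ∂p0 ∂μ
      ≤ ENNReal.ofReal (c t) := by
    intro t
    rw [lintegral_const_mul _ ((hEt t).lintegral_prod_right')]
    have swap2 : ∫⁻ ω, ∫⁻ ϑ, E t ϑ ω ∂p0 ∂μ = ∫⁻ ϑ, ∫⁻ ω, E t ϑ ω ∂μ ∂p0 :=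
      lintegral_lintegral_swap ((hEt t).aemeasurable)
    rw [swap2]
    have : ∫⁻ ϑ, ∫⁻ ω, E t ϑ ω ∂μ ∂p0 ≤ ∫⁻ ϑ, 1 ∂p0 :=
      lintegral_mono fun ϑ => hcanon ϑ t
    simp only [lintegral_one, measure_univ, mul_one] at this
    calc ENNReal.ofReal (c t) * ∫⁻ ϑ, ∫⁻ ω, E t ϑ ω ∂μ ∂p0
        ≤ ENNReal.ofReal (c t) * 1 := mul_le_mul_right this _
      _ = ENNReal.ofReal (c t) := mul_one _
  refine le_trans (lintegral_mono step2) ?_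
  have hcint : Integrable c := by
    have h := gauss_formula_int hy (le_refl (0:ℝ)) 0
    simpa [hcdef] using h
  have hc1 : ∫ t, c t = 1 := by
    have h := gauss_formula hy (le_refl (0:ℝ)) 0
    simpa [hcdef, Real.sqrt_sq hy.le, div_self hy.ne'] using h
  rw [← ofReal_integral_eq_lintegral_ofReal hcint (ae_of_all _ hcnn), hc1, ENNReal.ofReal_one]
end

section
/- For every x ≥ 0 one has E[ exp( x · √( ( E[Δ_θ | S]² / (E[V_θ] + E[V_θ | S]) − 2 KL(p̂_S ‖ p⁰) )₊ ) ) ] ≤ 2 e^{x²}, where (s)₊ = max{0, s}. -/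
set_option autoImplicit false

open MeasureTheory ProbabilityTheory Real
open scoped ENNReal

lemma gauss_lintegral (c v d k : ℝ) (hc : 0 < c) (hv : 0 ≤ v) :
    ∫⁻ lam : ℝ, ENNReal.ofReal (Real.sqrt (c / (2 * π)) *
        exp (lam * d - (c + v) / 2 * lam ^ 2 + k)) =
      ENNReal.ofReal (Real.sqrt (c / (c + v)) * exp (d ^ 2 / (2 * (c + v)) + k)) := by
  have hcv : 0 < c + v := by linarith
  have hπ : 0 < π := Real.pi_pos
  obtain ⟨b, hb_def⟩ : ∃ b : ℝ, b = (c + v) / 2 := ⟨_, rfl⟩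
  obtain ⟨m, hm_def⟩ : ∃ m : ℝ, m = d / (c + v) := ⟨_, rfl⟩
  have hb : 0 < b := by rw [hb_def]; positivity
  have hexp : ∀ lam : ℝ, lam * d - (c + v) / 2 * lam ^ 2 + k
      = -b * (lam - m) ^ 2 + (d ^ 2 / (2 * (c + v)) + k) := by
    intro lam
    rw [hb_def, hm_def]
    field_simp
    ring
  have hfun : (fun lam : ℝ => Real.sqrt (c / (2 * π)) *
      exp (lam * d - (c + v) / 2 * lam ^ 2 + k))
      = fun lam : ℝ => (Real.sqrt (c / (2 * π)) * exp (d ^ 2 / (2 * (c + v)) + k)) *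
        exp (-b * (lam - m) ^ 2) := by
    funext lam
    rw [hexp lam, Real.exp_add]
    ring
  have hint : Integrable (fun lam : ℝ => exp (-b * (lam - m) ^ 2)) :=
    (integrable_exp_neg_mul_sq hb).comp_sub_right m
  have hint2 : Integrable (fun lam : ℝ => (Real.sqrt (c / (2 * π)) *
      exp (d ^ 2 / (2 * (c + v)) + k)) * exp (-b * (lam - m) ^ 2)) := hint.const_mul _
  have hlhs : ∫⁻ lam : ℝ, ENNReal.ofReal (Real.sqrt (c / (2 * π)) *
      exp (lam * d - (c + v) / 2 * lam ^ 2 + k))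
      = ∫⁻ lam : ℝ, ENNReal.ofReal ((Real.sqrt (c / (2 * π)) *
        exp (d ^ 2 / (2 * (c + v)) + k)) * exp (-b * (lam - m) ^ 2)) :=
    lintegral_congr fun lam => by rw [hexp lam, Real.exp_add]; ring_nf
  rw [hlhs, ← ofReal_integral_eq_lintegral_ofReal hint2 (ae_of_all _ fun lam => by positivity)]
  congr 1
  rw [integral_const_mul]
  have h3 : (∫ lam : ℝ, exp (-b * (lam - m) ^ 2)) = ∫ t : ℝ, exp (-b * t ^ 2) :=
    integral_sub_right_eq_self (fun t : ℝ => exp (-b * t ^ 2)) m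
  rw [h3, integral_gaussian]
  have h4 : Real.sqrt (c / (2 * π)) * Real.sqrt (π / b) = Real.sqrt (c / (c + v)) := by
    rw [← Real.sqrt_mul (by positivity)]
    congr 1
    rw [hb_def]
    field_simp
  rw [mul_right_comm, h4]

lemma ptwise {c v d K x : ℝ} (hc : 0 < c) (hv : 0 ≤ v) (hx : 0 ≤ x) :
    exp (x * Real.sqrt (max (d ^ 2 / (c + v) - 2 * K) 0)) ≤
      exp (x ^ 2) / 2 * (Real.sqrt (c / (c + v)) * exp (d ^ 2 / (2 * (c + v)) + -K)
        + (v / (2 * c) + 2)) := by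
  have hcv : 0 < c + v := by linarith
  set A : ℝ := d ^ 2 / (2 * (c + v)) + -K with hA
  have hN : d ^ 2 / (c + v) - 2 * K = 2 * A := by rw [hA]; field_simp; ring
  set t : ℝ := Real.sqrt (max (2 * A) 0) with ht
  have ht0 : 0 ≤ t := Real.sqrt_nonneg _
  have ht2 : t ^ 2 = max (2 * A) 0 := Real.sq_sqrt (le_max_right _ _)
  have hmax : max (2 * A) 0 = 2 * max A 0 := by
    rcases le_total A 0 with h | h
    · rw [max_eq_right h, max_eq_right (by linarith)]; ring
    · rw [max_eq_left h, max_eq_left (by linarith)]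
  have h1 : x * t ≤ x ^ 2 + max A 0 / 2 := by nlinarith [sq_nonneg (x - t / 2)]
  set R : ℝ := Real.sqrt (c / (c + v)) with hR
  set s : ℝ := Real.sqrt ((c + v) / c) with hs
  have hRpos : 0 < R := Real.sqrt_pos.mpr (by positivity)
  have hs0 : 0 ≤ s := Real.sqrt_nonneg _
  have hs1 : 1 ≤ s := by
    rw [hs, show (1:ℝ) = Real.sqrt 1 by simp]
    exact Real.sqrt_le_sqrt (by rw [le_div_iff₀ hc]; linarith)
  have hRs : R * s = 1 := by
    rw [hR, hs, ← Real.sqrt_mul (by positivity),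
      show c / (c + v) * ((c + v) / c) = 1 by field_simp]
    exact Real.sqrt_one
  have hsle : s ≤ 1 + v / (2 * c) := by
    have h2 : s ^ 2 = (c + v) / c := Real.sq_sqrt (by positivity)
    have h2c : (c + v) / c ≤ (1 + v / (2 * c)) ^ 2 := by
      have hx2 : (1 + v / (2 * c)) ^ 2 - (c + v) / c = (v / (2 * c)) ^ 2 := by
        field_simp
        ring
      nlinarith [sq_nonneg (v / (2 * c))]
    calc s = Real.sqrt ((c + v) / c) := hs
      _ ≤ Real.sqrt ((1 + v / (2 * c)) ^ 2) := Real.sqrt_le_sqrt h2c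
      _ = 1 + v / (2 * c) := Real.sqrt_sq (by positivity)
  have key : 2 * exp (max A 0 / 2) ≤ R * exp A + s + 1 := by
    rcases le_total A 0 with h | h
    · rw [max_eq_right h]
      have hre : (0:ℝ) < R * exp A := by positivity
      simp only [zero_div, Real.exp_zero]
      linarith
    · rw [max_eq_left h]
      have hu : exp A = exp (A / 2) ^ 2 := by
        rw [sq, ← Real.exp_add]
        norm_num
      nlinarith [mul_nonneg hRpos.le (sq_nonneg (exp (A / 2) - s)), hRs,
        Real.exp_pos (A / 2), hu]
  calc exp (x * Real.sqrt (max (d ^ 2 / (c + v) - 2 * K) 0)) = exp (x * t) := by rw [ht, hN]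
    _ ≤ exp (x ^ 2) * exp (max A 0 / 2) := by
        rw [← Real.exp_add]; exact Real.exp_le_exp.mpr h1
    _ ≤ exp (x ^ 2) * ((R * exp A + s + 1) / 2) := by
        have := key
        have hep : (0:ℝ) < exp (x ^ 2) := Real.exp_pos _
        nlinarith [Real.exp_pos (max A 0 / 2)]
    _ ≤ exp (x ^ 2) / 2 * (R * exp A + (v / (2 * c) + 2)) := by
        have hep : (0:ℝ) < exp (x ^ 2) := Real.exp_pos _
        nlinarith


lemma dv_aux {Θ : Type*} [MeasurableSpace Θ] (ν ρ : Measure Θ)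
    [IsProbabilityMeasure ν] [IsProbabilityMeasure ρ] (hac : ν ≪ ρ)
    (f : Θ → ℝ) (hf : Measurable f) (hfi : Integrable f ν)
    (hgi : Integrable (fun ϑ => log (ν.rnDeriv ρ ϑ).toReal) ν) :
    ENNReal.ofReal (exp (∫ ϑ, f ϑ ∂ν - ∫ ϑ, log (ν.rnDeriv ρ ϑ).toReal ∂ν)) ≤
      ∫⁻ ϑ, ENNReal.ofReal (exp (f ϑ)) ∂ρ := by
  have hr : Measurable (ν.rnDeriv ρ) := Measure.measurable_rnDeriv ν ρ
  have hgm : Measurable fun ϑ => log (ν.rnDeriv ρ ϑ).toReal := hr.ennreal_toReal.log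
  have hwd : ρ.withDensity (ν.rnDeriv ρ) = ν := Measure.withDensity_rnDeriv_eq ν ρ hac
  have step1 : ∫⁻ ϑ, ENNReal.ofReal (exp (f ϑ - log (ν.rnDeriv ρ ϑ).toReal)) ∂ν ≤
      ∫⁻ ϑ, ENNReal.ofReal (exp (f ϑ)) ∂ρ := by
    have hwd2 : ∫⁻ ϑ, ENNReal.ofReal (exp (f ϑ - log (ν.rnDeriv ρ ϑ).toReal)) ∂ν =
        ∫⁻ ϑ, (ν.rnDeriv ρ * fun ϑ =>
          ENNReal.ofReal (exp (f ϑ - log (ν.rnDeriv ρ ϑ).toReal))) ϑ ∂ρ := by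
      rw [← lintegral_withDensity_eq_lintegral_mul ρ hr (show Measurable fun ϑ => ENNReal.ofReal (exp (f ϑ - log (ν.rnDeriv ρ ϑ).toReal)) from (hf.sub hgm).exp.ennreal_ofReal), hwd]
    rw [hwd2]
    refine lintegral_mono_ae ?_
    filter_upwards [Measure.rnDeriv_lt_top ν ρ] with ϑ hlt
    simp only [Pi.mul_apply]
    by_cases h0 : ν.rnDeriv ρ ϑ = 0
    · simp [h0]
    · have htr : 0 < (ν.rnDeriv ρ ϑ).toReal := ENNReal.toReal_pos h0 hlt.ne
      rw [Real.exp_sub, Real.exp_log htr]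
      calc ν.rnDeriv ρ ϑ * ENNReal.ofReal (exp (f ϑ) / (ν.rnDeriv ρ ϑ).toReal)
          = ENNReal.ofReal ((ν.rnDeriv ρ ϑ).toReal *
              (exp (f ϑ) / (ν.rnDeriv ρ ϑ).toReal)) := by
            rw [ENNReal.ofReal_mul ENNReal.toReal_nonneg, ENNReal.ofReal_toReal hlt.ne]
        _ = ENNReal.ofReal (exp (f ϑ)) := by
            congr 1
            field_simp
        _ ≤ ENNReal.ofReal (exp (f ϑ)) := le_rfl
  by_cases hT : (∫⁻ ϑ, ENNReal.ofReal (exp (f ϑ)) ∂ρ) = ⊤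
  · rw [hT]; exact le_top
  have hfin : ∫⁻ ϑ, ENNReal.ofReal (exp (f ϑ - log (ν.rnDeriv ρ ϑ).toReal)) ∂ν ≠ ⊤ :=
    (lt_of_le_of_lt step1 (lt_top_iff_ne_top.2 hT)).ne
  have hmeas2 : Measurable fun ϑ => exp (f ϑ - log (ν.rnDeriv ρ ϑ).toReal) := (hf.sub hgm).exp
  have hint : Integrable (fun ϑ => exp (f ϑ - log (ν.rnDeriv ρ ϑ).toReal)) ν := by
    refine ⟨hmeas2.aestronglyMeasurable, ?_⟩
    rw [hasFiniteIntegral_iff_ofReal (ae_of_all _ fun ϑ => (Real.exp_pos _).le)]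
    exact lt_top_iff_ne_top.2 hfin
  have hjen : exp (∫ ϑ, (f ϑ - log (ν.rnDeriv ρ ϑ).toReal) ∂ν) ≤
      ∫ ϑ, exp (f ϑ - log (ν.rnDeriv ρ ϑ).toReal) ∂ν := by
    have h := convexOn_exp.map_average_le continuous_exp.continuousOn isClosed_univ
      (ae_of_all _ fun ϑ => Set.mem_univ (f ϑ - log (ν.rnDeriv ρ ϑ).toReal))
      (hfi.sub hgi) (by exact hint)
    simpa [average_eq_integral] using h
  have heq : ∫ ϑ, exp (f ϑ - log (ν.rnDeriv ρ ϑ).toReal) ∂ν =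
      (∫⁻ ϑ, ENNReal.ofReal (exp (f ϑ - log (ν.rnDeriv ρ ϑ).toReal)) ∂ν).toReal :=
    integral_eq_lintegral_of_nonneg_ae (ae_of_all _ fun ϑ => (Real.exp_pos _).le)
      hmeas2.aestronglyMeasurable
  have hsub : ∫ ϑ, (f ϑ - log (ν.rnDeriv ρ ϑ).toReal) ∂ν =
      ∫ ϑ, f ϑ ∂ν - ∫ ϑ, log (ν.rnDeriv ρ ϑ).toReal ∂ν := integral_sub hfi hgi
  calc ENNReal.ofReal (exp (∫ ϑ, f ϑ ∂ν - ∫ ϑ, log (ν.rnDeriv ρ ϑ).toReal ∂ν))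
      ≤ ENNReal.ofReal ((∫⁻ ϑ, ENNReal.ofReal
          (exp (f ϑ - log (ν.rnDeriv ρ ϑ).toReal)) ∂ν).toReal) := by
        apply ENNReal.ofReal_le_ofReal
        rw [← hsub, ← heq]
        exact hjen
    _ = ∫⁻ ϑ, ENNReal.ofReal (exp (f ϑ - log (ν.rnDeriv ρ ϑ).toReal)) ∂ν :=
        ENNReal.ofReal_toReal hfin
    _ ≤ _ := step1


/-- for every `x ≥ 0`,
`E[exp(x √((E[Δ_θ|S]²/(E[V_θ] + E[V_θ|S]) − 2 KL(p̂_S‖p⁰))₊))] ≤ 2 e^{x²}`. -/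
theorem stmt6
    {Ω Z Θ : Type*} [MeasurableSpace Ω] [MeasurableSpace Z] [MeasurableSpace Θ]
    {μ : Measure Ω} [IsProbabilityMeasure μ]
    (S : Ω → Z) (hS : Measurable S)
    (Δ V : Θ → Ω → ℝ)
    (hΔ : Measurable (Function.uncurry Δ)) (hVmeas : Measurable (Function.uncurry V))
    (hV0 : ∀ ϑ ω, 0 ≤ V ϑ ω)
    -- each pair `(Δ_ϑ, √V_ϑ)` is a canonical pair
    (hcanon : ∀ ϑ, ∀ lam : ℝ,
      ∫⁻ ω, ENNReal.ofReal (exp (lam * Δ ϑ ω - lam ^ 2 / 2 * V ϑ ω)) ∂μ ≤ 1)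
    (phat : Kernel Z Θ) [IsMarkovKernel phat]
    (p0 : Measure Θ) [IsProbabilityMeasure p0]
    -- a.s. absolute continuity and a.s. finiteness of the KL divergence
    (hac : ∀ᵐ ω ∂μ, phat (S ω) ≪ p0)
    (hKLint : ∀ᵐ ω ∂μ,
      Integrable (fun ϑ => log ((phat (S ω)).rnDeriv p0 ϑ).toReal) (phat (S ω)))
    (KL : Ω → ℝ)
    (hKL : KL = fun ω => ∫ ϑ, log ((phat (S ω)).rnDeriv p0 ϑ).toReal ∂(phat (S ω)))
    -- `E[Δ_θ | S]` and `E[V_θ | S]` are well defined and finite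
    (hΔint : ∀ᵐ ω ∂μ, Integrable (fun ϑ => Δ ϑ ω) (phat (S ω)))
    (hVint : ∀ᵐ ω ∂μ, Integrable (fun ϑ => V ϑ ω) (phat (S ω)))
    (Dbar Vbar : Ω → ℝ)
    (hDbar : Dbar = fun ω => ∫ ϑ, Δ ϑ ω ∂(phat (S ω)))
    (hVbar : Vbar = fun ω => ∫ ϑ, V ϑ ω ∂(phat (S ω)))
    -- `E[V_θ]` is well defined and finite
    (hVbarInt : Integrable Vbar μ)
    (EV : ℝ) (hEV : EV = ∫ ω, Vbar ω ∂μ)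
    (hpos : ∀ᵐ ω ∂μ, 0 < EV + Vbar ω)
    (x : ℝ) (hx : 0 ≤ x) :
    ∫⁻ ω, ENNReal.ofReal (exp (x *
        sqrt (max (Dbar ω ^ 2 / (EV + Vbar ω) - 2 * KL ω) 0))) ∂μ ≤
      ENNReal.ofReal (2 * exp (x ^ 2)) := by

  -- positivity of `EV`
  have hVb0 : ∀ ω, 0 ≤ Vbar ω := by
    intro ω; rw [hVbar]; exact integral_nonneg fun ϑ => hV0 ϑ ω
  have hEV0 : 0 ≤ EV := by rw [hEV]; exact integral_nonneg hVb0
  have hEVpos : 0 < EV := by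
    rcases hEV0.lt_or_eq with h | h
    · exact h
    · exfalso
      have hz : ∫ ω, Vbar ω ∂μ = 0 := by rw [← hEV, ← h]
      have hvz : Vbar =ᵐ[μ] 0 :=
        (integral_eq_zero_iff_of_nonneg_ae (ae_of_all _ hVb0) hVbarInt).mp hz
      have hfalse : ∀ᵐ ω ∂μ, False := by
        filter_upwards [hpos, hvz] with ω h1 h2
        rw [← h, h2] at h1
        simp at h1
      obtain ⟨ω, hω⟩ := hfalse.exists
      exact hω
  -- the kernel exponential moment function
  obtain ⟨H, hH⟩ : ∃ H : ℝ → Ω → ℝ≥0∞, H = fun lam ω =>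
      ∫⁻ ϑ, ENNReal.ofReal (exp (lam * Δ ϑ ω - lam ^ 2 / 2 * V ϑ ω)) ∂p0 := ⟨_, rfl⟩
  have hHmeas : Measurable fun p : ℝ × Ω => H p.1 p.2 := by
    rw [hH]
    have m1 : Measurable fun q : (ℝ × Ω) × Θ => Δ q.2 q.1.2 :=
      hΔ.comp (measurable_snd.prodMk measurable_fst.snd)
    have m2 : Measurable fun q : (ℝ × Ω) × Θ => V q.2 q.1.2 :=
      hVmeas.comp (measurable_snd.prodMk measurable_fst.snd)
    have hintg : Measurable fun q : (ℝ × Ω) × Θ =>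
        ENNReal.ofReal (exp (q.1.1 * Δ q.2 q.1.2 - q.1.1 ^ 2 / 2 * V q.2 q.1.2)) :=
      ((measurable_fst.fst.mul m1).sub
        (((measurable_fst.fst.pow_const 2).div_const 2).mul m2)).exp.ennreal_ofReal
    exact Measurable.lintegral_prod_right' hintg
  have hHone : ∀ lam : ℝ, ∫⁻ ω, H lam ω ∂μ ≤ 1 := by
    intro lam
    have hmeas : Measurable (Function.uncurry fun ω ϑ =>
        ENNReal.ofReal (exp (lam * Δ ϑ ω - lam ^ 2 / 2 * V ϑ ω))) := by
      have m1 : Measurable fun q : Ω × Θ => Δ q.2 q.1 :=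
        hΔ.comp (measurable_snd.prodMk measurable_fst)
      have m2 : Measurable fun q : Ω × Θ => V q.2 q.1 :=
        hVmeas.comp (measurable_snd.prodMk measurable_fst)
      exact ((m1.const_mul lam).sub (m2.const_mul (lam ^ 2 / 2))).exp.ennreal_ofReal
    have hswap : ∫⁻ ω, H lam ω ∂μ = ∫⁻ ϑ, ∫⁻ ω,
        ENNReal.ofReal (exp (lam * Δ ϑ ω - lam ^ 2 / 2 * V ϑ ω)) ∂μ ∂p0 := by
      rw [hH]
      exact lintegral_lintegral_swap hmeas.aemeasurable
    rw [hswap]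
    calc ∫⁻ ϑ, ∫⁻ ω, ENNReal.ofReal (exp (lam * Δ ϑ ω - lam ^ 2 / 2 * V ϑ ω)) ∂μ ∂p0
        ≤ ∫⁻ _ : Θ, 1 ∂p0 := lintegral_mono fun ϑ => hcanon ϑ lam
      _ = 1 := by simp
  -- the Gaussian weight
  obtain ⟨w, hw⟩ : ∃ w : ℝ → ℝ, w = fun lam =>
      Real.sqrt (EV / (2 * π)) * exp (lam * 0 - (EV + 0) / 2 * lam ^ 2 + 0) := ⟨_, rfl⟩
  have hw0 : ∀ lam, 0 ≤ w lam := fun lam => by rw [hw]; positivity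
  have hwm : Measurable w := by
    rw [hw]
    exact (((measurable_id.mul_const 0).sub
      ((measurable_const.mul (measurable_id.pow_const 2)))).add_const 0).exp.const_mul _
  have hwint : ∫⁻ lam, ENNReal.ofReal (w lam) = 1 := by
    rw [hw, gauss_lintegral EV 0 0 0 hEVpos le_rfl]
    norm_num [div_self hEVpos.ne']
  -- Donsker–Varadhan plus Gaussian mixture, pointwise in `ω`
  have hstep : ∀ᵐ ω ∂μ,
      ENNReal.ofReal (Real.sqrt (EV / (EV + Vbar ω)) *
        exp (Dbar ω ^ 2 / (2 * (EV + Vbar ω)) + -KL ω)) ≤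
      ∫⁻ lam, ENNReal.ofReal (w lam) * H lam ω := by
    filter_upwards [hac, hKLint, hΔint, hVint] with ω h1 h2 h3 h4
    have hdv : ∀ lam : ℝ,
        ENNReal.ofReal (exp (lam * Dbar ω - lam ^ 2 / 2 * Vbar ω - KL ω)) ≤ H lam ω := by
      intro lam
      have hfm : Measurable fun ϑ => lam * Δ ϑ ω - lam ^ 2 / 2 * V ϑ ω := by
        have m1 : Measurable fun ϑ => Δ ϑ ω :=
          hΔ.comp (measurable_id.prodMk measurable_const)
        have m2 : Measurable fun ϑ => V ϑ ω :=
          hVmeas.comp (measurable_id.prodMk measurable_const)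
        exact (m1.const_mul lam).sub (m2.const_mul (lam ^ 2 / 2))
      have hfi : Integrable (fun ϑ => lam * Δ ϑ ω - lam ^ 2 / 2 * V ϑ ω) (phat (S ω)) :=
        (h3.const_mul lam).sub (h4.const_mul (lam ^ 2 / 2))
      have hdv0 := dv_aux (phat (S ω)) p0 h1 _ hfm hfi h2
      rw [integral_sub (h3.const_mul lam) (h4.const_mul (lam ^ 2 / 2)),
        integral_const_mul, integral_const_mul] at hdv0
      rw [hDbar, hVbar, hKL, hH]
      exact hdv0
    calc ENNReal.ofReal (Real.sqrt (EV / (EV + Vbar ω)) *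
          exp (Dbar ω ^ 2 / (2 * (EV + Vbar ω)) + -KL ω))
        = ∫⁻ lam, ENNReal.ofReal (Real.sqrt (EV / (2 * π)) *
            exp (lam * Dbar ω - (EV + Vbar ω) / 2 * lam ^ 2 + -KL ω)) :=
          (gauss_lintegral EV (Vbar ω) (Dbar ω) (-KL ω) hEVpos (hVb0 ω)).symm
      _ ≤ ∫⁻ lam, ENNReal.ofReal (w lam) * H lam ω := by
          refine lintegral_mono fun lam => ?_
          have hrw : Real.sqrt (EV / (2 * π)) *
              exp (lam * Dbar ω - (EV + Vbar ω) / 2 * lam ^ 2 + -KL ω)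
              = w lam * exp (lam * Dbar ω - lam ^ 2 / 2 * Vbar ω - KL ω) := by
            rw [hw]
            simp only
            rw [mul_assoc, ← Real.exp_add]
            congr 1
            ring
          rw [hrw, ENNReal.ofReal_mul (hw0 lam)]
          exact mul_le_mul_right (hdv lam) _
  -- the key integral bound
  have hF1 : ∫⁻ ω, ENNReal.ofReal (Real.sqrt (EV / (EV + Vbar ω)) *
      exp (Dbar ω ^ 2 / (2 * (EV + Vbar ω)) + -KL ω)) ∂μ ≤ 1 := by
    have hwHmeas : Measurable (Function.uncurry fun ω lam =>
        ENNReal.ofReal (w lam) * H lam ω) := by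
      have : Measurable fun p : Ω × ℝ => ENNReal.ofReal (w p.2) :=
        (hwm.comp measurable_snd).ennreal_ofReal
      exact this.mul (hHmeas.comp (measurable_snd.prodMk measurable_fst))
    calc ∫⁻ ω, ENNReal.ofReal (Real.sqrt (EV / (EV + Vbar ω)) *
          exp (Dbar ω ^ 2 / (2 * (EV + Vbar ω)) + -KL ω)) ∂μ
        ≤ ∫⁻ ω, (∫⁻ lam, ENNReal.ofReal (w lam) * H lam ω) ∂μ := lintegral_mono_ae hstep
      _ = ∫⁻ lam, ∫⁻ ω, ENNReal.ofReal (w lam) * H lam ω ∂μ :=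
          lintegral_lintegral_swap hwHmeas.aemeasurable
      _ = ∫⁻ lam, ENNReal.ofReal (w lam) * ∫⁻ ω, H lam ω ∂μ :=
          lintegral_congr fun lam => lintegral_const_mul' _ _ ENNReal.ofReal_ne_top
      _ ≤ ∫⁻ lam, ENNReal.ofReal (w lam) * 1 :=
          lintegral_mono fun lam => mul_le_mul_right (hHone lam) _
      _ = 1 := by simpa using hwint
  -- pointwise domination of the target integrand
  have hmain : ∀ᵐ ω ∂μ,
      ENNReal.ofReal (exp (x * Real.sqrt (max (Dbar ω ^ 2 / (EV + Vbar ω) - 2 * KL ω) 0))) ≤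
      ENNReal.ofReal (exp (x ^ 2) / 2) *
        (ENNReal.ofReal (Real.sqrt (EV / (EV + Vbar ω)) *
            exp (Dbar ω ^ 2 / (2 * (EV + Vbar ω)) + -KL ω))
          + ENNReal.ofReal (Vbar ω / (2 * EV) + 2)) := by
    refine ae_of_all _ fun ω => ?_
    have h := ptwise (c := EV) (v := Vbar ω) (d := Dbar ω) (K := KL ω) (x := x)
      hEVpos (hVb0 ω) hx
    calc ENNReal.ofReal (exp (x * Real.sqrt (max (Dbar ω ^ 2 / (EV + Vbar ω) - 2 * KL ω) 0)))
        ≤ ENNReal.ofReal (exp (x ^ 2) / 2 * (Real.sqrt (EV / (EV + Vbar ω)) *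
            exp (Dbar ω ^ 2 / (2 * (EV + Vbar ω)) + -KL ω) + (Vbar ω / (2 * EV) + 2))) :=
          ENNReal.ofReal_le_ofReal h
      _ = _ := by
          rw [ENNReal.ofReal_mul (by positivity),
            ENNReal.ofReal_add (by positivity) (by have := hVb0 ω; positivity)]
  have hVmeasAE : AEMeasurable (fun ω => ENNReal.ofReal (Vbar ω / (2 * EV) + 2)) μ :=
    ENNReal.measurable_ofReal.comp_aemeasurable
      ((hVbarInt.aemeasurable.div_const _).add aemeasurable_const)
  have hIntg : Integrable (fun ω => Vbar ω / (2 * EV) + 2) μ :=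
    (hVbarInt.div_const _).add (integrable_const 2)
  calc ∫⁻ ω, ENNReal.ofReal (exp (x *
        sqrt (max (Dbar ω ^ 2 / (EV + Vbar ω) - 2 * KL ω) 0))) ∂μ
      ≤ ∫⁻ ω, ENNReal.ofReal (exp (x ^ 2) / 2) *
        (ENNReal.ofReal (Real.sqrt (EV / (EV + Vbar ω)) *
            exp (Dbar ω ^ 2 / (2 * (EV + Vbar ω)) + -KL ω))
          + ENNReal.ofReal (Vbar ω / (2 * EV) + 2)) ∂μ := lintegral_mono_ae hmain
    _ = ENNReal.ofReal (exp (x ^ 2) / 2) *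
        ((∫⁻ ω, ENNReal.ofReal (Real.sqrt (EV / (EV + Vbar ω)) *
            exp (Dbar ω ^ 2 / (2 * (EV + Vbar ω)) + -KL ω)) ∂μ)
          + ∫⁻ ω, ENNReal.ofReal (Vbar ω / (2 * EV) + 2) ∂μ) := by
        rw [lintegral_const_mul' _ _ ENNReal.ofReal_ne_top,
          lintegral_add_right' _ hVmeasAE]
    _ ≤ ENNReal.ofReal (exp (x ^ 2) / 2) * (1 + ENNReal.ofReal (5 / 2)) := by
        have hsecond : ∫⁻ ω, ENNReal.ofReal (Vbar ω / (2 * EV) + 2) ∂μ ≤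
            ENNReal.ofReal (5 / 2) := by
          rw [← ofReal_integral_eq_lintegral_ofReal hIntg
            (ae_of_all _ fun ω => by have := hVb0 ω; positivity)]
          apply ENNReal.ofReal_le_ofReal
          rw [integral_add (hVbarInt.div_const _) (integrable_const 2), integral_div,
            integral_const]
          simp only [measure_univ, probReal_univ, ENNReal.toReal_one, smul_eq_mul, one_mul]
          have hEV2 : (∫ ω, Vbar ω ∂μ) / (2 * EV) = 1 / 2 := by
            rw [← hEV]; field_simp
          rw [hEV2]; norm_num
        exact mul_le_mul_right (add_le_add hF1 hsecond) _
    _ ≤ ENNReal.ofReal (2 * exp (x ^ 2)) := by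
        rw [show (1 : ℝ≥0∞) + ENNReal.ofReal (5 / 2) = ENNReal.ofReal (7 / 2) by
            rw [← ENNReal.ofReal_one, ← ENNReal.ofReal_add] <;> norm_num,
          ← ENNReal.ofReal_mul (by positivity)]
        apply ENNReal.ofReal_le_ofReal
        nlinarith [Real.exp_pos (x ^ 2)]
end

section
/- For any x ≥ 0, with probability at least 1 − 2 e^{−x} one has |E[Δ_θ | S]| ≤ √( 2 (E[V_θ] + E[V_θ | S]) (KL(p̂_S ‖ p⁰) + 2x) ). -/
set_option autoImplicit false

open MeasureTheory ProbabilityTheory Real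
open scoped ENNReal

lemma log_avg {α : Type*} [MeasurableSpace α] {q : Measure α} [IsProbabilityMeasure q]
    {φ : α → ℝ} (hφ : Integrable φ q) {B : ℝ} (hB : 0 < B)
    (h : ∫⁻ a, ENNReal.ofReal (exp (φ a)) ∂q ≤ ENNReal.ofReal B) :
    ∫ a, φ a ∂q ≤ Real.log B := by
  set g : α → ℝ := fun a => exp (φ a) with hg
  have hgm : AEStronglyMeasurable g q := (Real.continuous_exp.comp_aestronglyMeasurable hφ.1)
  have hgi : Integrable g q := by
    refine ⟨hgm, ?_⟩
    rw [HasFiniteIntegral]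
    calc ∫⁻ a, (‖g a‖₊ : ℝ≥0∞) ∂q = ∫⁻ a, ENNReal.ofReal (g a) ∂q := by
          refine lintegral_congr fun a => ?_
          exact Real.enorm_eq_ofReal (exp_pos _).le
      _ ≤ ENNReal.ofReal B := h
      _ < ⊤ := ENNReal.ofReal_lt_top
  have hgint : ∫ a, g a ∂q ≤ B := by
    rw [integral_eq_lintegral_of_nonneg_ae (Filter.Eventually.of_forall fun a => (exp_pos _).le)
      hgm]
    exact ENNReal.toReal_le_of_le_ofReal hB.le h
  have hpt : ∀ a, φ a ≤ g a / B + Real.log B - 1 := by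
    intro a
    have h1 : Real.log (g a / B) ≤ g a / B - 1 :=
      Real.log_le_sub_one_of_pos (div_pos (exp_pos _) hB)
    rw [Real.log_div (exp_pos _).ne' hB.ne', Real.log_exp] at h1
    linarith
  calc ∫ a, φ a ∂q ≤ ∫ a, (g a / B + Real.log B - 1) ∂q := by
        refine integral_mono hφ ?_ hpt
        have : (fun a => g a / B + log B - 1) = fun a => g a / B + (log B - 1) := by
          funext a; ring
        rw [this]
        exact (hgi.div_const B).add (integrable_const _)
    _ = (∫ a, g a ∂q) / B + Real.log B - 1 := by
        have : (fun a => g a / B + log B - 1) = fun a => g a / B + (log B - 1) := by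
          funext a; ring
        rw [this, integral_add (hgi.div_const B) (integrable_const _), integral_div,
          integral_const]
        simp
        ring
    _ ≤ B / B + Real.log B - 1 := by gcongr
    _ ≤ Real.log B := by rw [div_self hB.ne']; linarith

lemma dv_aux_s7 {α : Type*} [MeasurableSpace α] {q p : Measure α} [IsProbabilityMeasure q]
    [IsProbabilityMeasure p] (hqp : q ≪ p)
    {f : α → ℝ} (hfm : Measurable f) :
    ∫⁻ a, ENNReal.ofReal (exp (f a - Real.log (q.rnDeriv p a).toReal)) ∂q
      ≤ ∫⁻ a, ENNReal.ofReal (exp (f a)) ∂p := by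
  set r := q.rnDeriv p with hr
  have hrm : Measurable r := Measure.measurable_rnDeriv q p
  -- rewrite the q-integrand a.e.
  have hae : ∀ᵐ a ∂q, ENNReal.ofReal (exp (f a - Real.log (r a).toReal))
      = ENNReal.ofReal (exp (f a)) * (r a)⁻¹ := by
    filter_upwards [Measure.rnDeriv_pos hqp, hqp.ae_le (Measure.rnDeriv_ne_top q p)]
      with a hpos htop
    have ht : (0:ℝ) < (r a).toReal := ENNReal.toReal_pos hpos.ne' htop
    rw [Real.exp_sub, Real.exp_log ht, ENNReal.ofReal_div_of_pos ht,
      ENNReal.ofReal_toReal htop, div_eq_mul_inv]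
  rw [lintegral_congr_ae hae]
  have hq : q = p.withDensity r := (Measure.withDensity_rnDeriv_eq q p hqp).symm
  rw [hq, lintegral_withDensity_eq_lintegral_mul p hrm]
  · refine lintegral_mono fun a => ?_
    simp only [Pi.mul_apply]
    calc r a * (ENNReal.ofReal (exp (f a)) * (r a)⁻¹)
        = ENNReal.ofReal (exp (f a)) * (r a * (r a)⁻¹) := by ring
      _ ≤ ENNReal.ofReal (exp (f a)) * 1 := by
          gcongr
          exact ENNReal.mul_inv_le_one _
      _ = _ := mul_one _
  · exact (ENNReal.measurable_ofReal.comp (Real.measurable_exp.comp hfm)).mul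
      (hrm.inv)

lemma dv_s7 {α : Type*} [MeasurableSpace α] {q p : Measure α} [IsProbabilityMeasure q]
    [IsProbabilityMeasure p] (hqp : q ≪ p)
    (hllr : Integrable (fun a => Real.log (q.rnDeriv p a).toReal) q)
    {f : α → ℝ} (hfm : Measurable f) (hf : Integrable f q)
    {B : ℝ} (hB : 0 < B)
    (h : ∫⁻ a, ENNReal.ofReal (exp (f a)) ∂p ≤ ENNReal.ofReal B) :
    ∫ a, f a ∂q ≤ (∫ a, Real.log (q.rnDeriv p a).toReal ∂q) + Real.log B := by
  have key : ∫ a, (f a - Real.log (q.rnDeriv p a).toReal) ∂q ≤ Real.log B :=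
    log_avg (hf.sub hllr) hB ((dv_aux_s7 hqp hfm).trans h)
  rw [integral_sub hf hllr] at key
  linarith

lemma kl_nonneg {α : Type*} [MeasurableSpace α] {q p : Measure α} [IsProbabilityMeasure q]
    [IsProbabilityMeasure p] (hqp : q ≪ p)
    (hllr : Integrable (fun a => Real.log (q.rnDeriv p a).toReal) q) :
    0 ≤ ∫ a, Real.log (q.rnDeriv p a).toReal ∂q := by
  have := dv_s7 hqp hllr (f := fun _ => 0) measurable_const (integrable_const 0) one_pos ?_
  · simpa using this
  · simp

/-- Gaussian mixture identity. -/
lemma gauss_mix {a b c : ℝ} (hb : 0 ≤ b) (hc : 0 < c) :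
    ENNReal.ofReal (exp (a ^ 2 / (2 * (b + c))) * sqrt (c / (b + c)))
      = ∫⁻ lam : ℝ, ENNReal.ofReal
          (exp (lam * a - lam ^ 2 / 2 * b) * (sqrt (c / (2 * π)) * exp (- (c * lam ^ 2 / 2)))) := by
  have hbc : (0:ℝ) < b + c := by linarith
  set β : ℝ := (b + c) / 2 with hβ
  have hβ0 : 0 < β := by positivity
  set m : ℝ := a / (b + c) with hm
  have hpt : ∀ lam : ℝ, exp (lam * a - lam ^ 2 / 2 * b) * (sqrt (c / (2 * π)) * exp (- (c * lam ^ 2 / 2)))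
      = (exp (a ^ 2 / (2 * (b + c))) * sqrt (c / (2 * π))) * exp (-β * (lam - m) ^ 2) := by
    intro lam
    rw [show (exp (lam * a - lam ^ 2 / 2 * b) * (sqrt (c / (2 * π)) * exp (- (c * lam ^ 2 / 2))))
        = sqrt (c / (2 * π)) * exp (lam * a - lam ^ 2 / 2 * b + - (c * lam ^ 2 / 2)) by
      rw [Real.exp_add]; ring]
    rw [show (exp (a ^ 2 / (2 * (b + c))) * sqrt (c / (2 * π))) * exp (-β * (lam - m) ^ 2)
        = sqrt (c / (2 * π)) * exp (a ^ 2 / (2 * (b + c)) + -β * (lam - m) ^ 2) by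
      rw [Real.exp_add]; ring]
    congr 2
    rw [hβ, hm]
    field_simp
    ring
  simp_rw [hpt]
  have hint : Integrable (fun lam : ℝ => exp (-β * (lam - m) ^ 2)) := by
    have := (integrable_exp_neg_mul_sq hβ0).comp_sub_right m
    simpa using this
  rw [lintegral_congr fun lam => rfl]
  have e1 : ∫⁻ lam : ℝ, ENNReal.ofReal
      ((exp (a ^ 2 / (2 * (b + c))) * sqrt (c / (2 * π))) * exp (-β * (lam - m) ^ 2))
      = ENNReal.ofReal (∫ lam : ℝ, (exp (a ^ 2 / (2 * (b + c))) * sqrt (c / (2 * π))) * exp (-β * (lam - m) ^ 2)) := by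
    rw [ofReal_integral_eq_lintegral_ofReal (hint.const_mul _)
      (Filter.Eventually.of_forall fun lam => by positivity)]
  rw [e1, integral_const_mul]
  have e2 : ∫ lam : ℝ, exp (-β * (lam - m) ^ 2) = sqrt (π / β) := by
    rw [integral_sub_right_eq_self (fun lam => exp (-β * lam ^ 2)) m, integral_gaussian]
  rw [e2]
  rw [mul_assoc, ← Real.sqrt_mul (by positivity) (π / β),
    show c / (2 * π) * (π / β) = c / (b + c) by
      rw [hβ]; rw [div_mul_div_comm]; rw [div_eq_div_iff (by positivity) (by positivity)]; ring]

lemma mix_one {Ω : Type*} [MeasurableSpace Ω] {μ : Measure Ω} [IsProbabilityMeasure μ]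
    {D Vf : Ω → ℝ} (hD : Measurable D) (hV : Measurable Vf) (hV0 : ∀ ω, 0 ≤ Vf ω)
    (hcanon : ∀ lam : ℝ, ∫⁻ ω, ENNReal.ofReal (exp (lam * D ω - lam ^ 2 / 2 * Vf ω)) ∂μ ≤ 1)
    {c : ℝ} (hc : 0 < c) :
    ∫⁻ ω, ENNReal.ofReal (exp (D ω ^ 2 / (2 * (Vf ω + c))) * sqrt (c / (Vf ω + c))) ∂μ ≤ 1 := by
  set g : ℝ → ℝ := fun lam => sqrt (c / (2 * π)) * exp (- (c * lam ^ 2 / 2)) with hg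
  have hg0 : ∀ lam, 0 ≤ g lam := fun lam => by positivity
  have hgm : Measurable g :=
    (measurable_const.mul (((measurable_id.pow_const 2).const_mul c).div_const 2).neg.exp)
  have hFm : Measurable (Function.uncurry fun (ω : Ω) (lam : ℝ) =>
      ENNReal.ofReal (exp (lam * D ω - lam ^ 2 / 2 * Vf ω) * g lam)) := by
    apply ENNReal.measurable_ofReal.comp
    apply Measurable.mul
    · apply Real.measurable_exp.comp
      exact (measurable_snd.mul (hD.comp measurable_fst)).sub
        (((measurable_snd.pow_const 2).div_const 2).mul (hV.comp measurable_fst))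
    · exact hgm.comp measurable_snd
  calc ∫⁻ ω, ENNReal.ofReal (exp (D ω ^ 2 / (2 * (Vf ω + c))) * sqrt (c / (Vf ω + c))) ∂μ
      = ∫⁻ ω, ∫⁻ lam : ℝ, ENNReal.ofReal (exp (lam * D ω - lam ^ 2 / 2 * Vf ω) * g lam) ∂volume ∂μ := by
        refine lintegral_congr fun ω => ?_
        exact gauss_mix (hV0 ω) hc
    _ = ∫⁻ lam : ℝ, ∫⁻ ω, ENNReal.ofReal (exp (lam * D ω - lam ^ 2 / 2 * Vf ω) * g lam) ∂μ ∂volume :=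
        lintegral_lintegral_swap hFm.aemeasurable
    _ ≤ ∫⁻ lam : ℝ, ENNReal.ofReal (g lam) ∂volume := by
        refine lintegral_mono fun lam => ?_
        have e1 : ∀ ω, ENNReal.ofReal (exp (lam * D ω - lam ^ 2 / 2 * Vf ω) * g lam)
            = ENNReal.ofReal (exp (lam * D ω - lam ^ 2 / 2 * Vf ω)) * ENNReal.ofReal (g lam) :=
          fun ω => ENNReal.ofReal_mul (exp_pos _).le
        rw [lintegral_congr e1, lintegral_mul_const _ (by
          apply ENNReal.measurable_ofReal.comp
          exact Real.measurable_exp.comp ((hD.const_mul lam).sub (hV.const_mul _)))]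
        calc (∫⁻ ω, ENNReal.ofReal (exp (lam * D ω - lam ^ 2 / 2 * Vf ω)) ∂μ) * ENNReal.ofReal (g lam)
            ≤ 1 * ENNReal.ofReal (g lam) := by gcongr; exact hcanon lam
          _ = ENNReal.ofReal (g lam) := one_mul _
    _ = 1 := by
        have hgi : Integrable g := by
          have : Integrable (fun lam : ℝ => exp (- (c / 2) * lam ^ 2)) :=
            integrable_exp_neg_mul_sq (by positivity)
          refine (this.const_mul (sqrt (c / (2 * π)))).congr ?_
          refine Filter.Eventually.of_forall fun lam => ?_
          simp only
          rw [show -(c / 2) * lam ^ 2 = - (c * lam ^ 2 / 2) from by ring]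
        rw [← ofReal_integral_eq_lintegral_ofReal hgi (Filter.Eventually.of_forall hg0)]
        have : ∫ lam : ℝ, g lam = 1 := by
          rw [hg]
          simp_rw [integral_const_mul]
          have e : ∀ lam : ℝ, exp (- (c * lam ^ 2 / 2)) = exp (- (c/2) * lam ^ 2) := by
            intro lam; congr 1; ring
          rw [integral_congr_ae (Filter.Eventually.of_forall fun lam => e lam), integral_gaussian]
          rw [← Real.sqrt_mul (by positivity)]
          rw [show c / (2 * π) * (π / (c/2)) = 1 by field_simp]
          exact Real.sqrt_one
        rw [this]
        simp

lemma keylemma {Θ : Type*} [MeasurableSpace Θ] {q p : Measure Θ} [IsProbabilityMeasure q]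
    [IsProbabilityMeasure p] (hqp : q ≪ p)
    (hllr : Integrable (fun ϑ => Real.log (q.rnDeriv p ϑ).toReal) q)
    {D W : Θ → ℝ} (hD : Measurable D) (hW : Measurable W) (hW0 : ∀ ϑ, 0 ≤ W ϑ)
    (hDint : Integrable D q) (hWint : Integrable W q)
    {c y : ℝ} (hc : 0 < c) (hy : 0 < y)
    (hA : ∫⁻ ϑ, ENNReal.ofReal (exp (D ϑ ^ 2 / (2 * (W ϑ + c))) * sqrt (c / (W ϑ + c))) ∂p
        ≤ ENNReal.ofReal (exp y))
    (hE2 : ∫ ϑ, W ϑ ∂q ≤ c * (exp (2 * y) - 1)) :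
    |∫ ϑ, D ϑ ∂q| ≤ sqrt (2 * (c + ∫ ϑ, W ϑ ∂q) * ((∫ ϑ, Real.log (q.rnDeriv p ϑ).toReal ∂q) + 2 * y)) := by
  set K := ∫ ϑ, Real.log (q.rnDeriv p ϑ).toReal ∂q with hK
  have hK0 : 0 ≤ K := kl_nonneg hqp hllr
  set Wb := ∫ ϑ, W ϑ ∂q with hWb
  have hWb0 : 0 ≤ Wb := integral_nonneg hW0
  have hWc : ∀ ϑ, 0 < W ϑ + c := fun ϑ => by have := hW0 ϑ; linarith
  clear_value K Wb
  -- ℓ and its integral bound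
  set ℓ : Θ → ℝ := fun ϑ => (1 / 2) * Real.log (1 + W ϑ / c) with hℓ
  have hℓm : Measurable ℓ := (measurable_const.add (hW.div_const c)).log.const_mul _
  have hone : ∀ ϑ, (1:ℝ) ≤ 1 + W ϑ / c := fun ϑ => by
    have := div_nonneg (hW0 ϑ) hc.le; linarith
  have hℓ0 : ∀ ϑ, 0 ≤ ℓ ϑ := fun ϑ => by
    have := Real.log_nonneg (hone ϑ)
    simp only [hℓ]; linarith
  have hℓle : ∀ ϑ, ℓ ϑ ≤ W ϑ / (2 * c) := fun ϑ => by
    have h1 : Real.log (1 + W ϑ / c) ≤ W ϑ / c := by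
      have := Real.log_le_sub_one_of_pos (lt_of_lt_of_le one_pos (hone ϑ))
      linarith
    simp only [hℓ]
    calc (1/2) * Real.log (1 + W ϑ / c) ≤ (1/2) * (W ϑ / c) := by linarith
      _ = W ϑ / (2 * c) := by ring
  have hℓint : Integrable ℓ q := by
    refine Integrable.mono' (hWint.div_const (2 * c)) hℓm.aestronglyMeasurable ?_
    exact Filter.Eventually.of_forall fun ϑ => by
      rw [Real.norm_eq_abs, abs_of_nonneg (hℓ0 ϑ)]; exact hℓle ϑ
  have hℓbar : ∫ ϑ, ℓ ϑ ∂q ≤ y := by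
    have hφint : Integrable (fun ϑ => Real.log (1 + W ϑ / c)) q := by
      have he : (fun ϑ => Real.log (1 + W ϑ / c)) = fun ϑ => 2 * ℓ ϑ := by
        funext ϑ; simp only [hℓ]; ring
      rw [he]; exact hℓint.const_mul 2
    have hB : (0:ℝ) < 1 + Wb / c := by
      have := div_nonneg hWb0 hc.le; linarith
    have hInt1 : Integrable (fun ϑ => 1 + W ϑ / c) q :=
      (integrable_const (1:ℝ)).add (hWint.div_const c)
    have h1 : ∫ ϑ, Real.log (1 + W ϑ / c) ∂q ≤ Real.log (1 + Wb / c) := by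
      refine log_avg hφint hB ?_
      have e1 : ∫⁻ ϑ, ENNReal.ofReal (exp (Real.log (1 + W ϑ / c))) ∂q
          = ∫⁻ ϑ, ENNReal.ofReal (1 + W ϑ / c) ∂q := by
        refine lintegral_congr fun ϑ => ?_
        rw [Real.exp_log (lt_of_lt_of_le one_pos (hone ϑ))]
      have e2 : ∫⁻ ϑ, ENNReal.ofReal (1 + W ϑ / c) ∂q
          = ENNReal.ofReal (∫ ϑ, (1 + W ϑ / c) ∂q) :=
        (ofReal_integral_eq_lintegral_ofReal hInt1
          (Filter.Eventually.of_forall fun ϑ => le_trans one_pos.le (hone ϑ))).symm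
      have e3 : ∫ ϑ, (1 + W ϑ / c) ∂q = 1 + Wb / c := by
        rw [integral_add (integrable_const _) (hWint.div_const c), integral_const,
          integral_div]
        simp [hWb]
      rw [e1, e2, e3]
    have h2 : Real.log (1 + Wb / c) ≤ 2 * y := by
      have hle : 1 + Wb / c ≤ exp (2 * y) := by
        have : Wb / c ≤ exp (2*y) - 1 := by
          rw [div_le_iff₀ hc]; nlinarith [hE2]
        linarith
      calc Real.log (1 + Wb / c) ≤ Real.log (exp (2 * y)) := Real.log_le_log hB hle
        _ = 2 * y := Real.log_exp _
    have h3 : ∫ ϑ, ℓ ϑ ∂q = (1/2) * ∫ ϑ, Real.log (1 + W ϑ / c) ∂q := by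
      simp only [hℓ]
      rw [integral_const_mul]
    linarith
  -- h and its integral bound via truncation + DV
  set h : Θ → ℝ := fun ϑ => D ϑ ^ 2 / (2 * (W ϑ + c)) with hh
  have hhm : Measurable h := (hD.pow_const 2).div ((hW.add_const c).const_mul 2)
  have hh0 : ∀ ϑ, 0 ≤ h ϑ := fun ϑ => by
    have := hWc ϑ
    simp only [hh]; positivity
  have hmin_int : ∀ n : ℕ, Integrable (fun ϑ => min (h ϑ) (n:ℝ)) q := by
    intro n
    refine Integrable.mono' (integrable_const (n:ℝ))
      (hhm.min measurable_const).aestronglyMeasurable ?_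
    exact Filter.Eventually.of_forall fun ϑ => by
      rw [Real.norm_eq_abs, abs_of_nonneg (le_min (hh0 ϑ) n.cast_nonneg)]
      exact min_le_right _ _
  have hexpb : ∀ (n : ℕ) ϑ, exp (min (h ϑ) n - ℓ ϑ)
      ≤ exp (h ϑ) * sqrt (c / (W ϑ + c)) := by
    intro n ϑ
    have h1 : exp (min (h ϑ) n - ℓ ϑ) ≤ exp (h ϑ - ℓ ϑ) :=
      Real.exp_le_exp.2 (by have := min_le_left (h ϑ) (n:ℝ); linarith)
    have hu : (0:ℝ) < (W ϑ + c) / c := div_pos (hWc ϑ) hc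
    have h3 : exp (ℓ ϑ) = sqrt ((W ϑ + c) / c) := by
      have e : ℓ ϑ = Real.log ((W ϑ + c) / c) * (1/2) := by
        simp only [hℓ]
        rw [show (1:ℝ) + W ϑ / c = (W ϑ + c) / c by field_simp; ring]
        ring
      rw [e, Real.sqrt_eq_rpow, Real.rpow_def_of_pos hu]
    have h2 : exp (h ϑ - ℓ ϑ) = exp (h ϑ) * sqrt (c / (W ϑ + c)) := by
      rw [Real.exp_sub, h3, div_eq_mul_inv, ← Real.sqrt_inv, inv_div]
    linarith [h1, h2]
  have htrunc : ∀ n : ℕ, ∫ ϑ, min (h ϑ) (n:ℝ) ∂q ≤ K + 2 * y := by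
    intro n
    have hfm : Measurable fun ϑ => min (h ϑ) (n:ℝ) - ℓ ϑ :=
      (hhm.min measurable_const).sub hℓm
    have hfi : Integrable (fun ϑ => min (h ϑ) (n:ℝ) - ℓ ϑ) q := (hmin_int n).sub hℓint
    have hlint : ∫⁻ ϑ, ENNReal.ofReal (exp (min (h ϑ) (n:ℝ) - ℓ ϑ)) ∂p
        ≤ ENNReal.ofReal (exp y) := by
      refine le_trans (lintegral_mono fun ϑ => ?_) hA
      exact ENNReal.ofReal_le_ofReal (hexpb n ϑ)
    have hdv := dv_s7 hqp hllr hfm hfi (exp_pos y) hlint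
    rw [integral_sub (hmin_int n) hℓint, Real.log_exp] at hdv
    have hℓ0' : 0 ≤ ∫ ϑ, ℓ ϑ ∂q := integral_nonneg hℓ0
    linarith
  have hhlint : ∫⁻ ϑ, ENNReal.ofReal (h ϑ) ∂q ≤ ENNReal.ofReal (K + 2 * y) := by
    have hsup : ∀ ϑ, ⨆ n : ℕ, ENNReal.ofReal (min (h ϑ) (n:ℝ)) = ENNReal.ofReal (h ϑ) := by
      intro ϑ
      refine le_antisymm (iSup_le fun n => ENNReal.ofReal_le_ofReal (min_le_left _ _)) ?_
      have e : ENNReal.ofReal (h ϑ) = ENNReal.ofReal (min (h ϑ) ((⌈h ϑ⌉₊ : ℕ) : ℝ)) := by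
        rw [min_eq_left (Nat.le_ceil _)]
      rw [e]
      exact le_iSup (fun n : ℕ => ENNReal.ofReal (min (h ϑ) (n:ℝ))) _
    rw [← lintegral_congr hsup, lintegral_iSup]
    · refine iSup_le fun n => ?_
      rw [← ofReal_integral_eq_lintegral_ofReal (hmin_int n)
        (Filter.Eventually.of_forall fun ϑ => le_min (hh0 ϑ) n.cast_nonneg)]
      exact ENNReal.ofReal_le_ofReal (htrunc n)
    · exact fun n => ENNReal.measurable_ofReal.comp (hhm.min measurable_const)
    · intro i j hij ϑ
      exact ENNReal.ofReal_le_ofReal (min_le_min le_rfl (Nat.cast_le.2 hij))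
  have hhint : Integrable h q := by
    refine ⟨hhm.aestronglyMeasurable, ?_⟩
    rw [HasFiniteIntegral]
    calc ∫⁻ ϑ, (‖h ϑ‖₊ : ℝ≥0∞) ∂q = ∫⁻ ϑ, ENNReal.ofReal (h ϑ) ∂q :=
          lintegral_congr fun ϑ => Real.enorm_eq_ofReal (hh0 ϑ)
      _ ≤ ENNReal.ofReal (K + 2 * y) := hhlint
      _ < ⊤ := ENNReal.ofReal_lt_top
  have hhbar : ∫ ϑ, h ϑ ∂q ≤ K + 2 * y := by
    rw [integral_eq_lintegral_of_nonneg_ae (Filter.Eventually.of_forall hh0)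
      hhm.aestronglyMeasurable]
    exact ENNReal.toReal_le_of_le_ofReal (by positivity) hhlint
  -- AM-GM step
  set s := sqrt (2 * (K + 2 * y) / (Wb + c)) with hs
  have hwbc : (0:ℝ) < Wb + c := by linarith
  have hs0 : 0 < s := Real.sqrt_pos.2 (by positivity)
  have hsq' : s ^ 2 * (Wb + c) = 2 * (K + 2 * y) := by
    rw [hs, Real.sq_sqrt (by positivity)]
    field_simp
  clear_value s
  have hpt : ∀ ϑ, |D ϑ| ≤ (1 / s) * h ϑ + (s / 2) * (W ϑ + c) := by
    intro ϑ
    have hwc := hWc ϑ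
    have key : 2 * s * (W ϑ + c) * |D ϑ| ≤ D ϑ ^ 2 + s ^ 2 * (W ϑ + c) ^ 2 := by
      nlinarith [sq_nonneg (|D ϑ| - s * (W ϑ + c)), sq_abs (D ϑ)]
    have h2 : (1 / s) * h ϑ + (s / 2) * (W ϑ + c)
        = (D ϑ ^ 2 + s ^ 2 * (W ϑ + c) ^ 2) / (2 * s * (W ϑ + c)) := by
      simp only [hh]
      field_simp
    rw [h2, le_div_iff₀ (by positivity)]
    nlinarith [key]
  have hIabs : ∫ ϑ, |D ϑ| ∂q ≤ (1 / s) * (K + 2 * y) + (s / 2) * (Wb + c) := by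
    have hWcint : Integrable (fun ϑ => W ϑ + c) q := hWint.add (integrable_const c)
    have hRint : Integrable (fun ϑ => (1 / s) * h ϑ + (s / 2) * (W ϑ + c)) q :=
      (hhint.const_mul _).add (hWcint.const_mul _)
    calc ∫ ϑ, |D ϑ| ∂q ≤ ∫ ϑ, ((1 / s) * h ϑ + (s / 2) * (W ϑ + c)) ∂q :=
          integral_mono hDint.abs hRint hpt
      _ = (1 / s) * ∫ ϑ, h ϑ ∂q + (s / 2) * ∫ ϑ, (W ϑ + c) ∂q := by
          rw [integral_add (hhint.const_mul _) (hWcint.const_mul _),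
            integral_const_mul, integral_const_mul]
      _ = (1 / s) * ∫ ϑ, h ϑ ∂q + (s / 2) * (Wb + c) := by
          have e : ∫ ϑ, (W ϑ + c) ∂q = Wb + c := by
            rw [integral_add hWint (integrable_const c), integral_const, ← hWb]
            simp
          rw [e]
      _ ≤ (1 / s) * (K + 2 * y) + (s / 2) * (Wb + c) := by
          have h1s : 0 ≤ 1 / s := by positivity
          nlinarith [hhbar, h1s, mul_le_mul_of_nonneg_left hhbar h1s]
  have hfinal : sqrt (2 * (c + Wb) * (K + 2 * y)) = s * (c + Wb) := by
    rw [show 2 * (c + Wb) * (K + 2 * y) = (s * (c + Wb)) ^ 2 by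
        linear_combination (-(c + Wb)) * hsq',
      Real.sqrt_sq (mul_nonneg hs0.le (by linarith))]
  have hsum : (1 / s) * (K + 2 * y) + (s / 2) * (Wb + c) = s * (c + Wb) := by
    have hKy : K + 2 * y = s ^ 2 * (Wb + c) / 2 := by linarith [hsq']
    rw [hKy]
    field_simp
    ring
  calc |∫ ϑ, D ϑ ∂q| ≤ ∫ ϑ, |D ϑ| ∂q := by
        simpa [Real.norm_eq_abs] using norm_integral_le_integral_norm (μ := q) D
    _ ≤ s * (c + Wb) := by rw [← hsum]; exact hIabs
    _ = _ := by rw [hfinal]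

/-- for any `x ≥ 0`, with probability at least `1 − 2e^{−x}`,
`|E[Δ_θ|S]| ≤ √(2 (E[V_θ] + E[V_θ|S]) (KL(p̂_S‖p⁰) + 2x))`. -/
theorem stmt7
    {Ω Z Θ : Type*} [MeasurableSpace Ω] [MeasurableSpace Z] [MeasurableSpace Θ]
    {μ : Measure Ω} [IsProbabilityMeasure μ]
    (S : Ω → Z) (hS : Measurable S)
    (Δ V : Θ → Ω → ℝ)
    (hΔ : Measurable (Function.uncurry Δ)) (hVmeas : Measurable (Function.uncurry V))
    (hV0 : ∀ ϑ ω, 0 ≤ V ϑ ω)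
    -- each pair `(Δ_ϑ, √V_ϑ)` is a canonical pair
    (hcanon : ∀ ϑ, ∀ lam : ℝ,
      ∫⁻ ω, ENNReal.ofReal (exp (lam * Δ ϑ ω - lam ^ 2 / 2 * V ϑ ω)) ∂μ ≤ 1)
    (phat : Kernel Z Θ) [IsMarkovKernel phat]
    (p0 : Measure Θ) [IsProbabilityMeasure p0]
    -- a.s. absolute continuity and a.s. finiteness of the KL divergence
    (hac : ∀ᵐ ω ∂μ, phat (S ω) ≪ p0)
    (hKLint : ∀ᵐ ω ∂μ,
      Integrable (fun ϑ => log ((phat (S ω)).rnDeriv p0 ϑ).toReal) (phat (S ω)))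
    (KL : Ω → ℝ)
    (hKL : KL = fun ω => ∫ ϑ, log ((phat (S ω)).rnDeriv p0 ϑ).toReal ∂(phat (S ω)))
    -- `E[Δ_θ | S]` and `E[V_θ | S]` are well defined and finite
    (hΔint : ∀ᵐ ω ∂μ, Integrable (fun ϑ => Δ ϑ ω) (phat (S ω)))
    (hVint : ∀ᵐ ω ∂μ, Integrable (fun ϑ => V ϑ ω) (phat (S ω)))
    (Dbar Vbar : Ω → ℝ)
    (hDbar : Dbar = fun ω => ∫ ϑ, Δ ϑ ω ∂(phat (S ω)))
    (hVbar : Vbar = fun ω => ∫ ϑ, V ϑ ω ∂(phat (S ω)))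
    -- `E[V_θ]` is well defined and finite
    (hVbarInt : Integrable Vbar μ)
    (EV : ℝ) (hEV : EV = ∫ ω, Vbar ω ∂μ)
    (x : ℝ) (hx : 0 ≤ x) :
    ENNReal.ofReal (1 - 2 * exp (-x)) ≤
      μ {ω | |Dbar ω| ≤ sqrt (2 * (EV + Vbar ω) * (KL ω + 2 * x))} := by
  -- trivial case
  rcases le_or_gt (1 - 2 * exp (-x)) 0 with htriv | hpos
  · rw [ENNReal.ofReal_eq_zero.2 htriv]
    exact bot_le
  have hx2 : exp (-x) < 1 / 2 := by linarith
  have hex : 2 < exp x := by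
    have h1 : exp (-x) * exp x = 1 := by rw [← Real.exp_add]; simp
    nlinarith [exp_pos x, exp_pos (-x)]
  have hx0 : 0 < x := by
    by_contra h
    push_neg at h
    have := Real.exp_le_exp.2 (neg_nonneg.2 h)
    simp only [Real.exp_zero] at this
    nlinarith [Real.exp_le_exp.2 h, Real.exp_zero]
  -- basic positivity
  have hVbarnn : ∀ ω, 0 ≤ Vbar ω := fun ω => by
    rw [hVbar]; exact integral_nonneg fun ϑ => hV0 ϑ ω
  have hEV0 : 0 ≤ EV := by rw [hEV]; exact integral_nonneg hVbarnn
  -- measurable sections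
  have hDs : ∀ ϑ, Measurable fun ω => Δ ϑ ω := fun ϑ => hΔ.comp measurable_prodMk_left
  have hVs : ∀ ϑ, Measurable fun ω => V ϑ ω := fun ϑ => hVmeas.comp measurable_prodMk_left
  -- Vbar is measurable
  have hVbarm : Measurable Vbar := by
    rw [hVbar]
    have h1 : StronglyMeasurable (Function.uncurry fun (ω : Ω) (ϑ : Θ) => V ϑ ω) :=
      (hVmeas.comp measurable_swap).stronglyMeasurable
    have := h1.integral_kernel_prod_right (κ := phat.comap S hS)
    simpa [Kernel.comap_apply] using this.measurable
  -- the `c` sequence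
  set c : ℕ → ℝ := fun n => EV + 1 / (n + 1) with hcdef
  have hcn : ∀ n : ℕ, 0 < c n := fun n => by
    have : (0:ℝ) < 1 / (n + 1) := by positivity
    simp only [hcdef]; linarith
  -- the `A` functions
  set A : ℕ → Ω → ℝ≥0∞ := fun n ω => ∫⁻ ϑ,
    ENNReal.ofReal (exp (Δ ϑ ω ^ 2 / (2 * (V ϑ ω + c n))) * sqrt (c n / (V ϑ ω + c n))) ∂p0
    with hAdef
  have hIm : ∀ n : ℕ, Measurable (fun p : Ω × Θ =>
      ENNReal.ofReal (exp (Δ p.2 p.1 ^ 2 / (2 * (V p.2 p.1 + c n)))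
        * sqrt (c n / (V p.2 p.1 + c n)))) := by
    intro n
    have hΔ' : Measurable fun p : Ω × Θ => Δ p.2 p.1 := hΔ.comp measurable_swap
    have hV' : Measurable fun p : Ω × Θ => V p.2 p.1 := hVmeas.comp measurable_swap
    refine ENNReal.measurable_ofReal.comp (Measurable.mul ?_ ?_)
    · exact Real.measurable_exp.comp
        ((hΔ'.pow_const 2).div ((hV'.add_const _).const_mul 2))
    · exact Real.continuous_sqrt.measurable.comp (measurable_const.div (hV'.add_const _))
  have hAm : ∀ n : ℕ, Measurable (A n) := fun n => (hIm n).lintegral_prod_right'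
  have hA1 : ∀ n : ℕ, ∫⁻ ω, A n ω ∂μ ≤ 1 := by
    intro n
    calc ∫⁻ ω, A n ω ∂μ
        = ∫⁻ ϑ, ∫⁻ ω, ENNReal.ofReal (exp (Δ ϑ ω ^ 2 / (2 * (V ϑ ω + c n)))
            * sqrt (c n / (V ϑ ω + c n))) ∂μ ∂p0 :=
          lintegral_lintegral_swap (hIm n).aemeasurable
      _ ≤ ∫⁻ _ϑ, 1 ∂p0 := lintegral_mono fun ϑ =>
          mix_one (hDs ϑ) (hVs ϑ) (hV0 ϑ) (hcanon ϑ) (hcn n)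
      _ = 1 := by simp
  -- Markov bounds
  have hMark1 : ∀ n : ℕ, μ {ω | ENNReal.ofReal (exp x) ≤ A n ω} ≤ ENNReal.ofReal (exp (-x)) := by
    intro n
    have h1 := mul_meas_ge_le_lintegral₀ (μ := μ) (hAm n).aemeasurable (ENNReal.ofReal (exp x))
    have h2 : ENNReal.ofReal (exp x) * μ {ω | ENNReal.ofReal (exp x) ≤ A n ω} ≤ 1 :=
      le_trans h1 (hA1 n)
    have h3 : μ {ω | ENNReal.ofReal (exp x) ≤ A n ω} ≤ (ENNReal.ofReal (exp x))⁻¹ := by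
      rw [ENNReal.le_inv_iff_mul_le, mul_comm]
      exact h2
    rwa [← ENNReal.ofReal_inv_of_pos (exp_pos x), ← Real.exp_neg] at h3
  have hMark2 : ∀ n : ℕ,
      μ {ω | c n * (exp (2 * x) - 1) ≤ Vbar ω} ≤ ENNReal.ofReal (exp (-x)) := by
    intro n
    set a : ℝ := c n * (exp (2 * x) - 1) with hadef
    have he2x : 1 < exp (2 * x) := by
      rw [show (2:ℝ) * x = x + x by ring, Real.exp_add]
      nlinarith [hex]
    have ha0 : 0 < a := by
      have := hcn n
      rw [hadef]; nlinarith
    have hVlint : ∫⁻ ω, ENNReal.ofReal (Vbar ω) ∂μ = ENNReal.ofReal EV := by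
      rw [← ofReal_integral_eq_lintegral_ofReal hVbarInt
        (Filter.Eventually.of_forall hVbarnn), hEV]
    have h1 := mul_meas_ge_le_lintegral₀ (μ := μ) (hVbarm.ennreal_ofReal).aemeasurable
      (ENNReal.ofReal a)
    rw [hVlint] at h1
    have hsub : {ω | a ≤ Vbar ω} ⊆ {ω | ENNReal.ofReal a ≤ ENNReal.ofReal (Vbar ω)} :=
      fun ω hω => ENNReal.ofReal_le_ofReal hω
    have h2 : ENNReal.ofReal a * μ {ω | a ≤ Vbar ω} ≤ ENNReal.ofReal EV := by
      refine le_trans ?_ h1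
      exact mul_le_mul_right (measure_mono hsub) _
    -- real inequality: EV ≤ a * exp (-x)
    have hf : 1 ≤ (exp (2 * x) - 1) * exp (-x) := by
      have hrw : (exp (2 * x) - 1) * exp (-x) = exp x - exp (-x) := by
        rw [sub_mul, ← Real.exp_add, one_mul, show 2 * x + -x = x by ring]
      rw [hrw]
      nlinarith [hex, hx2]
    have hEVa : EV ≤ a * exp (-x) := by
      have h1n : (0:ℝ) < 1 / (n + 1) := by positivity
      have : a * exp (-x) = (EV + 1 / (n + 1)) * ((exp (2 * x) - 1) * exp (-x)) := by
        rw [hadef]; simp only [hcdef]; ring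
      rw [this]
      nlinarith [hEV0, h1n, hf]
    have h3 : ENNReal.ofReal a * μ {ω | a ≤ Vbar ω}
        ≤ ENNReal.ofReal a * ENNReal.ofReal (exp (-x)) := by
      refine le_trans h2 ?_
      rw [← ENNReal.ofReal_mul ha0.le]
      exact ENNReal.ofReal_le_ofReal hEVa
    have := (ENNReal.mul_le_mul_iff_right (a := ENNReal.ofReal a)
      (by simp [ENNReal.ofReal_eq_zero, not_le, ha0]) ENNReal.ofReal_ne_top).1 h3
    exact this
  -- good a.e. set
  set Good : Ω → Prop := fun ω => (phat (S ω) ≪ p0)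
    ∧ Integrable (fun ϑ => log ((phat (S ω)).rnDeriv p0 ϑ).toReal) (phat (S ω))
    ∧ Integrable (fun ϑ => Δ ϑ ω) (phat (S ω))
    ∧ Integrable (fun ϑ => V ϑ ω) (phat (S ω)) with hGoodDef
  have hGoodae : ∀ᵐ ω ∂μ, Good ω := by
    filter_upwards [hac, hKLint, hΔint, hVint] with ω h1 h2 h3 h4
    exact ⟨h1, h2, h3, h4⟩
  set N : Set Ω := {ω | ¬ Good ω} with hNdef
  have hN : μ N = 0 := hGoodae
  set Gs : Set Ω := (toMeasurable μ N)ᶜ with hGsdef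
  have hGm : MeasurableSet Gs := (measurableSet_toMeasurable μ N).compl
  have hGc : μ Gsᶜ = 0 := by
    rw [hGsdef, compl_compl, measure_toMeasurable]
    exact hN
  have hGsub : ∀ ω ∈ Gs, Good ω := by
    intro ω hω
    by_contra h
    exact hω (subset_toMeasurable μ N h)
  -- the good events
  set F : ℕ → Set Ω := fun n =>
    ({ω | ENNReal.ofReal (exp x) ≤ A n ω}ᶜ ∩ {ω | c n * (exp (2 * x) - 1) ≤ Vbar ω}ᶜ) ∩ Gs
    with hFdef
  have hFm : ∀ n, MeasurableSet (F n) := by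
    intro n
    refine MeasurableSet.inter (MeasurableSet.inter ?_ ?_) hGm
    · exact (measurableSet_le measurable_const (hAm n)).compl
    · exact (measurableSet_le measurable_const hVbarm).compl
  have hFge : ∀ n, 1 - (ENNReal.ofReal (exp (-x)) + ENNReal.ofReal (exp (-x))) ≤ μ (F n) := by
    intro n
    rw [tsub_le_iff_right]
    have hcompl : μ (F n)ᶜ ≤ ENNReal.ofReal (exp (-x)) + ENNReal.ofReal (exp (-x)) := by
      have hc2 : (F n)ᶜ = ({ω | ENNReal.ofReal (exp x) ≤ A n ω}
          ∪ {ω | c n * (exp (2 * x) - 1) ≤ Vbar ω}) ∪ Gsᶜ := by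
        simp only [hFdef, Set.compl_inter, compl_compl]
      rw [hc2]
      calc μ (({ω | ENNReal.ofReal (exp x) ≤ A n ω}
              ∪ {ω | c n * (exp (2 * x) - 1) ≤ Vbar ω}) ∪ Gsᶜ)
          ≤ μ ({ω | ENNReal.ofReal (exp x) ≤ A n ω}
              ∪ {ω | c n * (exp (2 * x) - 1) ≤ Vbar ω}) + μ Gsᶜ := measure_union_le _ _
        _ = μ ({ω | ENNReal.ofReal (exp x) ≤ A n ω}
              ∪ {ω | c n * (exp (2 * x) - 1) ≤ Vbar ω}) := by rw [hGc, add_zero]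
        _ ≤ μ {ω | ENNReal.ofReal (exp x) ≤ A n ω}
              + μ {ω | c n * (exp (2 * x) - 1) ≤ Vbar ω} := measure_union_le _ _
        _ ≤ _ := add_le_add (hMark1 n) (hMark2 n)
    calc (1:ℝ≥0∞) = μ Set.univ := measure_univ.symm
      _ = μ (F n ∪ (F n)ᶜ) := by rw [Set.union_compl_self]
      _ ≤ μ (F n) + μ (F n)ᶜ := measure_union_le _ _
      _ ≤ μ (F n) + (ENNReal.ofReal (exp (-x)) + ENNReal.ofReal (exp (-x))) := by
          exact add_le_add le_rfl hcompl
  -- the limit sets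
  set U : ℕ → Set Ω := fun N => ⋃ n, ⋃ (_ : N ≤ n), F n with hUdef
  have hUm : ∀ N, MeasurableSet (U N) := fun N =>
    MeasurableSet.iUnion fun n => MeasurableSet.iUnion fun _ => hFm n
  have hUanti : Antitone U := by
    intro N M hNM
    refine Set.iUnion₂_subset fun n hn => ?_
    exact Set.subset_iUnion₂ (s := fun n _ => F n) n (le_trans hNM hn)
  have hUge : ∀ N, 1 - (ENNReal.ofReal (exp (-x)) + ENNReal.ofReal (exp (-x))) ≤ μ (U N) := by
    intro N
    refine le_trans (hFge N) (measure_mono ?_)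
    exact Set.subset_iUnion₂ (s := fun n _ => F n) N le_rfl
  have htend := tendsto_measure_iInter_atTop (μ := μ)
    (fun N => (hUm N).nullMeasurableSet) hUanti ⟨0, measure_ne_top μ _⟩
  have hInterge : 1 - (ENNReal.ofReal (exp (-x)) + ENNReal.ofReal (exp (-x)))
      ≤ μ (⋂ N, U N) := ge_of_tendsto' htend hUge
  -- inclusion into the target set
  have hsubT : (⋂ N, U N) ⊆ {ω | |Dbar ω| ≤ sqrt (2 * (EV + Vbar ω) * (KL ω + 2 * x))} := by
    intro ω hω
    simp only [Set.mem_iInter, Set.mem_iUnion] at hω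
    have hDs' : ∀ ω : Ω, Measurable fun ϑ => Δ ϑ ω := fun ω => hΔ.comp measurable_prodMk_right
    have hVs' : ∀ ω : Ω, Measurable fun ϑ => V ϑ ω := fun ω => hVmeas.comp measurable_prodMk_right
    have hFcons : ∀ n, ω ∈ F n →
        Dbar ω ^ 2 ≤ 2 * (EV + 1 / ((n:ℝ) + 1) + Vbar ω) * (KL ω + 2 * x) ∧ 0 ≤ KL ω := by
      intro n hωF
      obtain ⟨⟨h1, h2⟩, hg⟩ := hωF
      obtain ⟨hacω, hklω, hΔω, hVω⟩ := hGsub ω hg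
      have h1' : ¬ (ENNReal.ofReal (exp x) ≤ A n ω) := h1
      have h2' : ¬ (c n * (exp (2 * x) - 1) ≤ Vbar ω) := h2
      have hA' : A n ω ≤ ENNReal.ofReal (exp x) := le_of_not_ge h1'
      have hV' : (∫ ϑ, V ϑ ω ∂(phat (S ω))) ≤ c n * (exp (2 * x) - 1) := by
        rw [← show Vbar ω = ∫ ϑ, V ϑ ω ∂(phat (S ω)) from by rw [hVbar]]
        exact (not_le.1 h2').le
      haveI : IsProbabilityMeasure (phat (S ω)) := inferInstance
      have hkey := keylemma (q := phat (S ω)) (p := p0) hacω hklω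
        (D := fun ϑ => Δ ϑ ω) (W := fun ϑ => V ϑ ω) (hDs' ω) (hVs' ω)
        (fun ϑ => hV0 ϑ ω) hΔω hVω (hcn n) hx0 hA' hV'
      have habs : |Dbar ω| ≤ sqrt (2 * (c n + Vbar ω) * (KL ω + 2 * x)) := by
        rw [hDbar, hVbar, hKL]
        exact hkey
      have hKL0 : 0 ≤ KL ω := by
        rw [hKL]
        exact kl_nonneg hacω hklω
      have hz : 0 ≤ 2 * (c n + Vbar ω) * (KL ω + 2 * x) := by
        have := hcn n
        have := hVbarnn ω
        nlinarith
      have hsq : Dbar ω ^ 2 ≤ 2 * (c n + Vbar ω) * (KL ω + 2 * x) := by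
        calc Dbar ω ^ 2 = |Dbar ω| ^ 2 := (sq_abs _).symm
          _ ≤ sqrt (2 * (c n + Vbar ω) * (KL ω + 2 * x)) ^ 2 :=
              pow_le_pow_left₀ (abs_nonneg _) habs 2
          _ = _ := Real.sq_sqrt hz
      simp only [hcdef] at hsq
      exact ⟨hsq, hKL0⟩
    have hω' : ∀ Nt : ℕ, ∃ n, Nt ≤ n ∧ ω ∈ F n := by
      intro Nt
      have h := hω Nt
      rw [hUdef] at h
      simpa using h
    have hKL0 : 0 ≤ KL ω := by
      obtain ⟨n, _, hωF⟩ := hω' 0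
      exact (hFcons n hωF).2
    have hb : ∀ Nt : ℕ, Dbar ω ^ 2 ≤ 2 * (EV + 1 / ((Nt:ℝ) + 1) + Vbar ω) * (KL ω + 2 * x) := by
      intro Nt
      obtain ⟨n, hNn, hωF⟩ := hω' Nt
      have hsq := (hFcons n hωF).1
      have hmono : (1:ℝ) / ((n:ℝ) + 1) ≤ 1 / ((Nt:ℝ) + 1) := by
        apply one_div_le_one_div_of_le (by positivity)
        have : (Nt:ℝ) ≤ (n:ℝ) := Nat.cast_le.2 hNn
        linarith
      have hKx : 0 ≤ KL ω + 2 * x := by linarith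
      nlinarith [hsq, hmono, hKx]
    have hlim : Filter.Tendsto (fun N : ℕ => 2 * (EV + 1 / ((N:ℝ) + 1) + Vbar ω) * (KL ω + 2 * x))
        Filter.atTop (nhds (2 * (EV + Vbar ω) * (KL ω + 2 * x))) := by
      have h0 : Filter.Tendsto (fun N : ℕ => 1 / ((N:ℝ) + 1)) Filter.atTop (nhds 0) :=
        tendsto_one_div_add_atTop_nhds_zero_nat
      have h1 : Filter.Tendsto (fun N : ℕ => EV + 1 / ((N:ℝ) + 1) + Vbar ω)
          Filter.atTop (nhds (EV + 0 + Vbar ω)) :=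
        (Filter.Tendsto.add tendsto_const_nhds h0).add tendsto_const_nhds
      have h2 := (h1.const_mul 2).mul_const (KL ω + 2 * x)
      simpa using h2
    have hfin : Dbar ω ^ 2 ≤ 2 * (EV + Vbar ω) * (KL ω + 2 * x) := ge_of_tendsto' hlim hb
    show |Dbar ω| ≤ sqrt (2 * (EV + Vbar ω) * (KL ω + 2 * x))
    calc |Dbar ω| = sqrt (Dbar ω ^ 2) := (Real.sqrt_sq_eq_abs _).symm
      _ ≤ _ := Real.sqrt_le_sqrt hfin
  -- final chain
  calc ENNReal.ofReal (1 - 2 * exp (-x))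
      = 1 - ENNReal.ofReal (2 * exp (-x)) := by
        rw [ENNReal.ofReal_sub _ (by positivity), ENNReal.ofReal_one]
    _ = 1 - (ENNReal.ofReal (exp (-x)) + ENNReal.ofReal (exp (-x))) := by
        rw [← ENNReal.ofReal_add (exp_pos _).le (exp_pos _).le]
        congr 2
        ring
    _ ≤ μ (⋂ N, U N) := hInterge
    _ ≤ μ {ω | |Dbar ω| ≤ sqrt (2 * (EV + Vbar ω) * (KL ω + 2 * x))} := measure_mono hsubT
end

section
/- For any y > 0 and any x ≥ 2, with probability at least 1 − e^{−x} one has |E[Δ_θ | S]| ≤ √( 2 (y + E[V_θ | S]) ( KL(p̂_S ‖ p⁰) + x + (x/2) ln(1 + E[V_θ | S]/y) ) ). -/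
set_option autoImplicit false
set_option maxHeartbeats 1000000

open MeasureTheory ProbabilityTheory Real
open scoped ENNReal

/-- Change of measure / Donsker-Varadhan one direction. -/
lemma core {α : Type*} [MeasurableSpace α] (p q : Measure α)
    [IsProbabilityMeasure p] [IsProbabilityMeasure q]
    (w : α → ℝ≥0∞) (hw : Measurable w) (hwtop : ∀ᵐ a ∂p, w a ≠ ∞)
    (hq : p.withDensity w = q)
    (g : α → ℝ) (hgm : Measurable g) (hg : Integrable g q)
    (hlog : Integrable (fun a => Real.log (w a).toReal) q)
    (x : ℝ) (hb : ∫⁻ a, ENNReal.ofReal (exp (g a)) ∂p ≤ ENNReal.ofReal (exp x)) :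
    ∫ a, g a ∂q ≤ ∫ a, Real.log (w a).toReal ∂q + x := by
  set a : α → ℝ := fun t => g t - Real.log (w t).toReal - x with ha
  have ham : Measurable a := (hgm.sub ((hw.ennreal_toReal).log)).sub measurable_const
  have hmeas : Measurable fun t => ENNReal.ofReal (rexp (a t)) :=
    (measurable_exp.comp ham).ennreal_ofReal
  have key : ∫⁻ t, ENNReal.ofReal (exp (a t)) ∂q ≤ 1 := by
    rw [← hq, lintegral_withDensity_eq_lintegral_mul p hw hmeas]
    have hle : ∀ᵐ t ∂p, (w * fun t => ENNReal.ofReal (rexp (a t))) t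
        ≤ ENNReal.ofReal (exp (g t - x)) := by
      filter_upwards [hwtop] with t htop
      simp only [Pi.mul_apply]
      rcases eq_or_ne (w t) 0 with h0 | h0
      · simp [h0]
      · have hpos : 0 < (w t).toReal := ENNReal.toReal_pos h0 htop
        have hrw : exp (a t) = exp (g t - x) / (w t).toReal := by
          rw [ha]
          simp only
          rw [show g t - Real.log (w t).toReal - x = (g t - x) - Real.log (w t).toReal by ring,
            exp_sub, exp_log hpos]
        rw [hrw, mul_comm, ← ENNReal.ofReal_toReal htop,
          ← ENNReal.ofReal_mul (by positivity),
          ENNReal.toReal_ofReal ENNReal.toReal_nonneg, div_mul_cancel₀ _ hpos.ne']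
    calc ∫⁻ t, (w * fun t => ENNReal.ofReal (rexp (a t))) t ∂p
        ≤ ∫⁻ t, ENNReal.ofReal (exp (g t - x)) ∂p := lintegral_mono_ae hle
      _ = ∫⁻ t, ENNReal.ofReal (exp (g t)) * ENNReal.ofReal (exp (-x)) ∂p := by
          congr 1; ext t
          rw [← ENNReal.ofReal_mul (exp_nonneg _), ← exp_add]; ring_nf
      _ = (∫⁻ t, ENNReal.ofReal (exp (g t)) ∂p) * ENNReal.ofReal (exp (-x)) :=
          lintegral_mul_const _ ((measurable_exp.comp hgm).ennreal_ofReal)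
      _ ≤ ENNReal.ofReal (exp x) * ENNReal.ofReal (exp (-x)) := mul_le_mul_left hb _
      _ = 1 := by
          rw [← ENNReal.ofReal_mul (exp_nonneg _), ← exp_add]
          simp
  -- now the real part
  have hA : Integrable a q := (hg.sub hlog).sub (integrable_const x)
  have hint : Integrable (fun t => a t + 1) q := hA.add (integrable_const 1)
  have h1 : ∫ t, (a t + 1) ∂q ≤ (∫⁻ t, ENNReal.ofReal (a t + 1) ∂q).toReal := by
    rw [integral_eq_lintegral_pos_part_sub_lintegral_neg_part hint]
    have : (∫⁻ t, ENNReal.ofReal (-(a t + 1)) ∂q).toReal ≥ 0 := ENNReal.toReal_nonneg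
    linarith
  have h2 : ∫⁻ t, ENNReal.ofReal (a t + 1) ∂q ≤ 1 := by
    refine le_trans (lintegral_mono (fun t => ?_)) key
    exact ENNReal.ofReal_le_ofReal (add_one_le_exp (a t))
  have h3 : ∫ t, (a t + 1) ∂q ≤ 1 := by
    refine h1.trans ?_
    calc (∫⁻ t, ENNReal.ofReal (a t + 1) ∂q).toReal ≤ (1 : ℝ≥0∞).toReal :=
      ENNReal.toReal_mono (by simp) h2
    _ = 1 := by simp
  have h4 : ∫ t, (a t + 1) ∂q = ∫ t, a t ∂q + 1 := by
    rw [integral_add hA (integrable_const 1), integral_const]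
    simp
  have h5 : ∫ t, a t ∂q = ∫ t, g t ∂q - ∫ t, Real.log (w t).toReal ∂q - x := by
    rw [ha]
    simp only
    rw [integral_sub (f := fun t => g t - Real.log (w t).toReal) (hg.sub hlog) (integrable_const x), integral_sub hg hlog, integral_const]
    simp
  rw [h4, h5] at h3
  linarith

lemma real_ineq (y v u δ m : ℝ) (hy : 0 < y) (hv : 0 ≤ v) (hu : 0 ≤ u) :
    m*δ - (m^2 + 1/(y+v))/2*u - (m^2*y/2 + Real.log (1+v/y)/2 - v/(2*(y+v)))
      ≤ Real.log (y/(y+u))/2 + δ^2/(2*(y+u)) := by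
  have hyu : 0 < y + u := by linarith
  have hyv : 0 < y + v := by linarith
  have hexp : (δ - m*(y+u))^2/(2*(y+u)) = δ^2/(2*(y+u)) - m*δ + m^2*y/2 + m^2*u/2 := by
    field_simp
    ring
  have h1 : m*δ ≤ δ^2/(2*(y+u)) + m^2*y/2 + m^2*u/2 := by
    have h0 := div_nonneg (sq_nonneg (δ - m*(y+u))) (by positivity : (0:ℝ) ≤ 2*(y+u))
    linarith [hexp ▸ h0]
  have h2 : Real.log (y+u) - Real.log (y+v) ≤ u/(y+v) - v/(y+v) := by
    have hpos : (0:ℝ) < (y+u)/(y+v) := by positivity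
    have hl := Real.log_le_sub_one_of_pos hpos
    have e : Real.log ((y+u)/(y+v)) = Real.log (y+u) - Real.log (y+v) :=
      Real.log_div hyu.ne' hyv.ne'
    have e2 : (y+u)/(y+v) - 1 = u/(y+v) - v/(y+v) := by field_simp; ring
    linarith [e ▸ hl, e2]
  have e1 : Real.log (1+v/y) = Real.log (y+v) - Real.log y := by
    rw [show 1+v/y = (y+v)/y by field_simp, Real.log_div hyv.ne' hy.ne']
  have e2 : Real.log (y/(y+u)) = Real.log y - Real.log (y+u) :=
    Real.log_div hy.ne' hyu.ne'
  have hsplit : (m^2 + 1/(y+v))/2*u = m^2*u/2 + u/(y+v)/2 := by ring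
  have hv2 : v/(2*(y+v)) = v/(y+v)/2 := by rw [div_div, mul_comm]
  rw [e1, e2, hsplit, hv2]
  linarith

lemma gauss_lb (y v u δ m : ℝ) (hy : 0 < y) (hv : 0 ≤ v) (hu : 0 ≤ u) :
    ENNReal.ofReal (exp (m*δ - (m^2 + 1/(y+v))/2*u
        - (m^2*y/2 + Real.log (1+v/y)/2 - v/(2*(y+v)))))
      ≤ ∫⁻ l, ENNReal.ofReal (exp (l*δ - l^2/2*u)) ∂(gaussianReal 0 (1/y).toNNReal) := by
  have hyu : 0 < y + u := by linarith
  have hvy : ((1/y).toNNReal : ℝ) = 1/y := Real.coe_toNNReal _ (by positivity)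
  have hvyne : (1/y).toNNReal ≠ 0 := by
    simp only [ne_eq, ← NNReal.coe_eq_zero, hvy]
    positivity
  have hs : ((1/(y+u)).toNNReal : ℝ) = 1/(y+u) := Real.coe_toNNReal _ (by positivity)
  have hsne : (1/(y+u)).toNNReal ≠ 0 := by
    simp only [ne_eq, ← NNReal.coe_eq_zero, hs]
    positivity
  set A : ℝ := Real.sqrt (y/(y+u)) * exp (δ^2/(2*(y+u))) with hA
  have hmeasf : Measurable fun l : ℝ => ENNReal.ofReal (exp (l*δ - l^2/2*u)) := by
    fun_prop
  have step1 : ∫⁻ l, ENNReal.ofReal (exp (l*δ - l^2/2*u)) ∂(gaussianReal 0 (1/y).toNNReal)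
      = ∫⁻ l, (gaussianPDF 0 (1/y).toNNReal * fun l => ENNReal.ofReal (exp (l*δ - l^2/2*u))) l := by
    rw [gaussianReal_of_var_ne_zero _ hvyne,
      lintegral_withDensity_eq_lintegral_mul _ (measurable_gaussianPDF _ _) hmeasf]
  have step2 : ∀ l : ℝ, (gaussianPDF 0 (1/y).toNNReal * fun l => ENNReal.ofReal (exp (l*δ - l^2/2*u))) l
      = ENNReal.ofReal A * gaussianPDF (δ/(y+u)) (1/(y+u)).toNNReal l := by
    intro l
    simp only [Pi.mul_apply, gaussianPDF]
    rw [← ENNReal.ofReal_mul (gaussianPDFReal_nonneg _ _ _),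
      ← ENNReal.ofReal_mul (by positivity : (0:ℝ) ≤ A)]
    congr 1
    unfold gaussianPDFReal
    rw [hvy, hs, hA]
    have hsqrt : (Real.sqrt (2*π*(1/y)))⁻¹
        = Real.sqrt (y/(y+u)) * (Real.sqrt (2*π*(1/(y+u))))⁻¹ := by
      rw [← Real.sqrt_inv, ← Real.sqrt_inv, ← Real.sqrt_mul (by positivity)]
      congr 1
      field_simp
    rw [hsqrt]
    rw [show Real.sqrt (y/(y+u)) * (Real.sqrt (2*π*(1/(y+u))))⁻¹ * exp (-(l-0)^2/(2*(1/y)))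
        * exp (l*δ - l^2/2*u)
      = Real.sqrt (y/(y+u)) * ((Real.sqrt (2*π*(1/(y+u))))⁻¹
        * (exp (-(l-0)^2/(2*(1/y))) * exp (l*δ - l^2/2*u))) by ring]
    rw [show Real.sqrt (y/(y+u)) * exp (δ^2/(2*(y+u)))
        * ((Real.sqrt (2*π*(1/(y+u))))⁻¹ * exp (-(l-δ/(y+u))^2/(2*(1/(y+u)))))
      = Real.sqrt (y/(y+u)) * ((Real.sqrt (2*π*(1/(y+u))))⁻¹
        * (exp (δ^2/(2*(y+u))) * exp (-(l-δ/(y+u))^2/(2*(1/(y+u)))))) by ring]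
    congr 2
    rw [← exp_add, ← exp_add]
    congr 1
    field_simp
    ring
  have step3 : ∫⁻ l, ENNReal.ofReal A * gaussianPDF (δ/(y+u)) (1/(y+u)).toNNReal l
      = ENNReal.ofReal A := by
    rw [lintegral_const_mul _ (measurable_gaussianPDF _ _),
      lintegral_gaussianPDF_eq_one _ hsne, mul_one]
  rw [step1]
  simp_rw [step2]
  rw [step3]
  refine ENNReal.ofReal_le_ofReal ?_
  rw [← Real.exp_log (show 0 < A by rw [hA]; positivity)]
  refine Real.exp_le_exp.2 ?_
  have : Real.log A = Real.log (y/(y+u))/2 + δ^2/(2*(y+u)) := by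
    rw [hA, Real.log_mul (by positivity) (exp_ne_zero _), Real.log_exp,
      Real.log_sqrt (by positivity)]
  rw [this]
  exact real_ineq y v u δ m hy hv hu

/-- Pointwise (per-ω) step. -/
lemma pointwise {Θ : Type*} [MeasurableSpace Θ] (p0 ν : Measure Θ)
    [IsProbabilityMeasure p0] [IsProbabilityMeasure ν] (hacω : ν ≪ p0)
    (d w : Θ → ℝ) (hdm : Measurable d) (hwm : Measurable w) (hw0 : ∀ ϑ, 0 ≤ w ϑ)
    (hdint : Integrable d ν) (hwint : Integrable w ν)
    (hKLω : Integrable (fun ϑ => log (ν.rnDeriv p0 ϑ).toReal) ν)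
    (y x : ℝ) (hy : 0 < y) (hx : 2 ≤ x)
    (hbound : ∫⁻ ϑ, ∫⁻ l, ENNReal.ofReal (exp (l * d ϑ - l^2/2 * w ϑ))
        ∂(gaussianReal 0 (1/y).toNNReal) ∂p0 ≤ ENNReal.ofReal (exp x)) :
    |∫ ϑ, d ϑ ∂ν| ≤ sqrt (2 * (y + ∫ ϑ, w ϑ ∂ν) *
      ((∫ ϑ, log (ν.rnDeriv p0 ϑ).toReal ∂ν) + x +
        x/2 * log (1 + (∫ ϑ, w ϑ ∂ν)/y))) := by
  set v : ℝ := ∫ ϑ, w ϑ ∂ν with hvdef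
  set D : ℝ := ∫ ϑ, d ϑ ∂ν with hDdef
  set K : ℝ := ∫ ϑ, log (ν.rnDeriv p0 ϑ).toReal ∂ν with hKdef
  have hv0 : 0 ≤ v := integral_nonneg hw0
  have hyv : 0 < y + v := by linarith
  set m : ℝ := D/(y+v) with hm
  set g : Θ → ℝ := fun ϑ => m * d ϑ - (m^2 + 1/(y+v))/2 * w ϑ
    - (m^2*y/2 + Real.log (1+v/y)/2 - v/(2*(y+v))) with hgdef
  have hgm : Measurable g :=
    ((hdm.const_mul m).sub (hwm.const_mul _)).sub measurable_const
  have hgint : Integrable g ν :=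
    ((hdint.const_mul m).sub (hwint.const_mul _)).sub (integrable_const _)
  have hbound2 : ∫⁻ ϑ, ENNReal.ofReal (exp (g ϑ)) ∂p0 ≤ ENNReal.ofReal (exp x) := by
    refine le_trans (lintegral_mono fun ϑ => ?_) hbound
    exact gauss_lb y v (w ϑ) (d ϑ) m hy hv0 (hw0 ϑ)
  have hwtop : ∀ᵐ ϑ ∂p0, ν.rnDeriv p0 ϑ ≠ ∞ := by
    filter_upwards [Measure.rnDeriv_lt_top ν p0] with ϑ h using h.ne
  have hcore := core p0 ν (ν.rnDeriv p0) (Measure.measurable_rnDeriv ν p0) hwtop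
    (Measure.withDensity_rnDeriv_eq ν p0 hacω) g hgm hgint hKLω x hbound2
  have hint : ∫ ϑ, g ϑ ∂ν = m * D - (m^2 + 1/(y+v))/2 * v
      - (m^2*y/2 + Real.log (1+v/y)/2 - v/(2*(y+v))) := by
    rw [hgdef]
    simp only
    rw [integral_sub (f := fun ϑ => m * d ϑ - (m^2 + 1/(y+v))/2 * w ϑ)
        ((hdint.const_mul m).sub (hwint.const_mul _)) (integrable_const _),
      integral_sub (f := fun ϑ => m * d ϑ) (hdint.const_mul m) (hwint.const_mul _),
      integral_const_mul, integral_const_mul, integral_const]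
    simp [hvdef, hDdef]
  rw [hint] at hcore
  have hL0 : 0 ≤ Real.log (1+v/y) := Real.log_nonneg (by
    have : 0 ≤ v/y := by positivity
    linarith)
  have halg : m * D - (m^2 + 1/(y+v))/2 * v
      - (m^2*y/2 + Real.log (1+v/y)/2 - v/(2*(y+v)))
      = D^2/(2*(y+v)) - Real.log (1+v/y)/2 := by
    rw [hm]
    field_simp
    ring
  rw [halg] at hcore
  have h6 : D^2/(2*(y+v)) ≤ K + x + x/2 * Real.log (1+v/y) := by nlinarith
  rw [div_le_iff₀ (by positivity : (0:ℝ) < 2*(y+v))] at h6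
  have h7 : D^2 ≤ 2*(y+v) * (K + x + x/2 * Real.log (1+v/y)) := by linarith
  rw [← Real.sqrt_sq_eq_abs]
  exact Real.sqrt_le_sqrt h7

/-- for any `y > 0` and `x ≥ 2`, with probability at least `1 − e^{−x}`,
`|E[Δ_θ|S]| ≤ √(2 (y + E[V_θ|S]) (KL(p̂_S‖p⁰) + x + (x/2) ln(1 + E[V_θ|S]/y)))`. -/
theorem stmt8
    {Ω Z Θ : Type*} [MeasurableSpace Ω] [MeasurableSpace Z] [MeasurableSpace Θ]
    {μ : Measure Ω} [IsProbabilityMeasure μ]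
    (S : Ω → Z) (hS : Measurable S)
    (Δ V : Θ → Ω → ℝ)
    (hΔ : Measurable (Function.uncurry Δ)) (hVmeas : Measurable (Function.uncurry V))
    (hV0 : ∀ ϑ ω, 0 ≤ V ϑ ω)
    -- each pair `(Δ_ϑ, √V_ϑ)` is a canonical pair
    (hcanon : ∀ ϑ, ∀ lam : ℝ,
      ∫⁻ ω, ENNReal.ofReal (exp (lam * Δ ϑ ω - lam ^ 2 / 2 * V ϑ ω)) ∂μ ≤ 1)
    (phat : Kernel Z Θ) [IsMarkovKernel phat]
    (p0 : Measure Θ) [IsProbabilityMeasure p0]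
    -- a.s. absolute continuity and a.s. finiteness of the KL divergence
    (hac : ∀ᵐ ω ∂μ, phat (S ω) ≪ p0)
    (hKLint : ∀ᵐ ω ∂μ,
      Integrable (fun ϑ => log ((phat (S ω)).rnDeriv p0 ϑ).toReal) (phat (S ω)))
    (KL : Ω → ℝ)
    (hKL : KL = fun ω => ∫ ϑ, log ((phat (S ω)).rnDeriv p0 ϑ).toReal ∂(phat (S ω)))
    -- `E[Δ_θ | S]` and `E[V_θ | S]` are well defined and finite
    (hΔint : ∀ᵐ ω ∂μ, Integrable (fun ϑ => Δ ϑ ω) (phat (S ω)))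
    (hVint : ∀ᵐ ω ∂μ, Integrable (fun ϑ => V ϑ ω) (phat (S ω)))
    (Dbar Vbar : Ω → ℝ)
    (hDbar : Dbar = fun ω => ∫ ϑ, Δ ϑ ω ∂(phat (S ω)))
    (hVbar : Vbar = fun ω => ∫ ϑ, V ϑ ω ∂(phat (S ω)))
    (y x : ℝ) (hy : 0 < y) (hx : 2 ≤ x) :
    ENNReal.ofReal (1 - exp (-x)) ≤
      μ {ω | |Dbar ω| ≤
        sqrt (2 * (y + Vbar ω) * (KL ω + x + x / 2 * log (1 + Vbar ω / y)))} := by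
  set γ : Measure ℝ := gaussianReal 0 (1/y).toNNReal with hγ
  set φ : Ω → ℝ × Θ → ℝ≥0∞ :=
    fun ω z => ENNReal.ofReal (exp (z.1 * Δ z.2 ω - z.1^2/2 * V z.2 ω)) with hφdef
  have hφ : Measurable (Function.uncurry φ) := by
    have hm1 : Measurable fun p : Ω × ℝ × Θ => Δ p.2.2 p.1 :=
      hΔ.comp ((measurable_snd.comp measurable_snd).prodMk measurable_fst)
    have hm2 : Measurable fun p : Ω × ℝ × Θ => V p.2.2 p.1 :=
      hVmeas.comp ((measurable_snd.comp measurable_snd).prodMk measurable_fst)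
    have hm3 : Measurable fun p : Ω × ℝ × Θ => p.2.1 := measurable_fst.comp measurable_snd
    exact (measurable_exp.comp
      (((hm3.mul hm1)).sub (((hm3.pow_const 2).div_const 2).mul hm2))).ennreal_ofReal
  set G : Ω → ℝ≥0∞ := fun ω => ∫⁻ z, φ ω z ∂(γ.prod p0) with hGdef
  have hGmeas : Measurable G := Measurable.lintegral_prod_right hφ
  have hG1 : ∫⁻ ω, G ω ∂μ ≤ 1 := by
    have swap : ∫⁻ ω, ∫⁻ z, φ ω z ∂(γ.prod p0) ∂μ = ∫⁻ z, ∫⁻ ω, φ ω z ∂μ ∂(γ.prod p0) :=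
      lintegral_lintegral_swap hφ.aemeasurable
    calc ∫⁻ ω, G ω ∂μ = ∫⁻ z, ∫⁻ ω, φ ω z ∂μ ∂(γ.prod p0) := swap
      _ ≤ ∫⁻ _, 1 ∂(γ.prod p0) := by
          refine lintegral_mono (fun z => ?_)
          simpa [hφdef] using hcanon z.2 z.1
      _ = 1 := by simp
  set bad : Set Ω := {ω | ENNReal.ofReal (exp x) ≤ G ω} with hbad
  have hbadmeas : MeasurableSet bad := measurableSet_le measurable_const hGmeas
  have hbadle : μ bad ≤ ENNReal.ofReal (exp (-x)) := by
    have h := mul_meas_ge_le_lintegral₀ (μ := μ) hGmeas.aemeasurable (ENNReal.ofReal (exp x))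
    have h2 : ENNReal.ofReal (exp x) * μ bad ≤ 1 := h.trans hG1
    calc μ bad = ENNReal.ofReal (exp (-x)) * (ENNReal.ofReal (exp x) * μ bad) := by
          rw [← mul_assoc, ← ENNReal.ofReal_mul (exp_nonneg _), ← exp_add]
          simp
      _ ≤ ENNReal.ofReal (exp (-x)) * 1 := mul_le_mul_right h2 _
      _ = ENNReal.ofReal (exp (-x)) := mul_one _
  have hae : ∀ᵐ ω ∂μ, ω ∈ badᶜ →
      ω ∈ {ω | |Dbar ω| ≤
        sqrt (2 * (y + Vbar ω) * (KL ω + x + x / 2 * log (1 + Vbar ω / y)))} := by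
    filter_upwards [hac, hKLint, hΔint, hVint] with ω hacω hKLω hΔω hVω hωA
    simp only [hbad, Set.mem_compl_iff, Set.mem_setOf_eq] at hωA
    have hGle : G ω ≤ ENNReal.ofReal (exp x) := (not_le.1 hωA).le
    have hφω : Measurable (φ ω) := by
      have he : φ ω = fun z : ℝ × Θ =>
          ENNReal.ofReal (exp (z.1 * Δ z.2 ω - z.1^2/2 * V z.2 ω)) := rfl
      rw [he]
      have a1 : Measurable fun z : ℝ × Θ => Δ z.2 ω :=
        hΔ.comp (measurable_snd.prodMk measurable_const)
      have a2 : Measurable fun z : ℝ × Θ => V z.2 ω :=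
        hVmeas.comp (measurable_snd.prodMk measurable_const)
      exact (measurable_exp.comp (((measurable_fst.mul a1)).sub
        (((measurable_fst.pow_const 2).div_const 2).mul a2))).ennreal_ofReal
    have hGω : G ω = ∫⁻ ϑ, ∫⁻ l, φ ω (l, ϑ) ∂γ ∂p0 :=
      lintegral_prod_symm (φ ω) hφω.aemeasurable
    have hbound : ∫⁻ ϑ, ∫⁻ l, ENNReal.ofReal (exp (l * Δ ϑ ω - l^2/2 * V ϑ ω))
        ∂(gaussianReal 0 (1/y).toNNReal) ∂p0 ≤ ENNReal.ofReal (exp x) := by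
      calc ∫⁻ ϑ, ∫⁻ l, ENNReal.ofReal (exp (l * Δ ϑ ω - l^2/2 * V ϑ ω))
            ∂(gaussianReal 0 (1/y).toNNReal) ∂p0 = G ω := hGω.symm
        _ ≤ ENNReal.ofReal (exp x) := hGle
    have hd : Measurable fun ϑ => Δ ϑ ω :=
      hΔ.comp (measurable_id.prodMk measurable_const)
    have hw : Measurable fun ϑ => V ϑ ω :=
      hVmeas.comp (measurable_id.prodMk measurable_const)
    have := pointwise p0 (phat (S ω)) hacω (fun ϑ => Δ ϑ ω) (fun ϑ => V ϑ ω)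
      hd hw (fun ϑ => hV0 ϑ ω) hΔω hVω hKLω y x hy hx hbound
    show |Dbar ω| ≤ sqrt (2 * (y + Vbar ω) * (KL ω + x + x / 2 * log (1 + Vbar ω / y)))
    rw [hDbar, hVbar, hKL]
    exact this
  calc ENNReal.ofReal (1 - exp (-x))
      = 1 - ENNReal.ofReal (exp (-x)) := by
        rw [ENNReal.ofReal_sub _ (exp_nonneg _), ENNReal.ofReal_one]
    _ ≤ 1 - μ bad := tsub_le_tsub_left hbadle 1
    _ = μ badᶜ := by
        rw [measure_compl hbadmeas (measure_ne_top μ bad), measure_univ]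
    _ ≤ μ {ω | |Dbar ω| ≤
        sqrt (2 * (y + Vbar ω) * (KL ω + x + x / 2 * log (1 + Vbar ω / y)))} :=
        measure_mono_ae hae
end

section
/- Let W₁, …, Wₙ be i.i.d. nonnegative random variables with E[W₁²] < ∞ and E[W₁²] > 0. Then for any t ∈ [0, n E[W₁]), P( Σ_{i=1}^n W_i ≤ t ) ≤ exp( − (t − n E[W₁])² / (2 n E[W₁²]) ). -/
set_option autoImplicit false
set_option maxHeartbeats 1000000

open MeasureTheory ProbabilityTheory Real
open scoped ENNReal

/-- For `x ≥ 0`, `exp (-x) ≤ 1 - x + x^2/2`. -/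
lemma exp_neg_le_one_sub_add_sq {x : ℝ} (hx : 0 ≤ x) :
    Real.exp (-x) ≤ 1 - x + x ^ 2 / 2 := by
  set f : ℝ → ℝ := fun y => 1 - y + y ^ 2 / 2 - Real.exp (-y) with hf
  have hd : ∀ y : ℝ, HasDerivAt f (-1 + y + Real.exp (-y)) y := by
    intro y
    have h1 : HasDerivAt (fun y : ℝ => Real.exp (-y)) (-Real.exp (-y)) y := by
      simpa using (hasDerivAt_neg y).exp
    have h2 : HasDerivAt (fun y : ℝ => 1 - y + y ^ 2 / 2) (-1 + y) y := by
      have := ((hasDerivAt_const y (1 : ℝ)).sub (hasDerivAt_id y)).add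
        ((hasDerivAt_pow 2 y).div_const 2)
      refine this.congr_deriv ?_
      push_cast
      ring
    have := h2.sub h1
    refine this.congr_deriv ?_
    ring
  have hmono : MonotoneOn f (Set.Ici 0) := by
    apply monotoneOn_of_deriv_nonneg (convex_Ici 0)
    · intro y _
      exact (hd y).differentiableAt.continuousAt.continuousWithinAt
    · exact fun y _ => (hd y).differentiableAt.differentiableWithinAt
    · intro y hy
      rw [(hd y).deriv]
      nlinarith [Real.add_one_le_exp (-y)]
  have h0 : f 0 = 0 := by simp [hf]
  have := hmono (Set.self_mem_Ici) (Set.mem_Ici.2 hx) hx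
  rw [h0] at this
  simp only [hf] at this
  linarith

/-- lower-tail Chernoff bound for sums of i.i.d. nonnegative weights:
for `t ∈ [0, n E[W₁])`,
`P(Σ Wᵢ ≤ t) ≤ exp(−(t − n E[W₁])² / (2 n E[W₁²]))`. -/
theorem stmt14
    {Ω : Type*} [MeasurableSpace Ω] {μ : Measure Ω} [IsProbabilityMeasure μ]
    {n : ℕ} (hn : 0 < n)
    (W : Fin n → Ω → ℝ) (hWmeas : ∀ i, Measurable (W i)) (hWpos : ∀ i ω, 0 ≤ W i ω)
    (hindep : iIndepFun W μ)
    (hident : ∀ i, IdentDistrib (W i) (W ⟨0, hn⟩) μ μ)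
    (hW2 : MemLp (W ⟨0, hn⟩) 2 μ)
    (EW EW2 : ℝ) (hEW : EW = ∫ ω, W ⟨0, hn⟩ ω ∂μ)
    (hEW2 : EW2 = ∫ ω, (W ⟨0, hn⟩ ω) ^ 2 ∂μ) (hEW2pos : 0 < EW2)
    (t : ℝ) (ht0 : 0 ≤ t) (ht : t < n * EW) :
    μ {ω | ∑ i, W i ω ≤ t} ≤
      ENNReal.ofReal (exp (-(t - n * EW) ^ 2 / (2 * n * EW2))) := by
  set W₀ := W ⟨0, hn⟩ with hW₀
  have hnpos : (0 : ℝ) < n := Nat.cast_pos.2 hn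
  set s : ℝ := (n * EW - t) / (n * EW2) with hs
  have hspos : 0 < s := div_pos (by linarith) (by positivity)
  set u : ℝ := -s with hu
  have hu0 : u ≤ 0 := by simp [hu]; linarith
  -- integrability of exp(u * W i)
  have hint : ∀ i, Integrable (fun ω => exp (u * W i ω)) μ := by
    intro i
    refine (integrable_const (1 : ℝ)).mono'
      ((hWmeas i).const_mul u).exp.aestronglyMeasurable ?_
    filter_upwards with ω
    rw [Real.norm_eq_abs, abs_of_pos (exp_pos _)]
    calc exp (u * W i ω) ≤ exp 0 := by
          apply exp_le_exp.2
          exact mul_nonpos_of_nonpos_of_nonneg hu0 (hWpos i ω)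
      _ = 1 := exp_zero
  have hintW : Integrable W₀ μ := hW2.integrable one_le_two
  have hintW2 : Integrable (fun ω => W₀ ω ^ 2) μ := hW2.integrable_sq
  -- bound on mgf of W₀
  have hmgf : mgf W₀ μ u ≤ exp (-s * EW + s ^ 2 * EW2 / 2) := by
    have hb : mgf W₀ μ u ≤ 1 - s * EW + s ^ 2 * EW2 / 2 := by
      have h1 : mgf W₀ μ u ≤ ∫ ω, (1 - s * W₀ ω + s ^ 2 * W₀ ω ^ 2 / 2) ∂μ := by
        refine integral_mono (hint _) ?_ ?_
        · exact ((integrable_const (1 : ℝ)).sub (hintW.const_mul s)).add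
            ((hintW2.const_mul (s ^ 2)).div_const 2)
        · intro ω
          have h := exp_neg_le_one_sub_add_sq (mul_nonneg hspos.le (hWpos ⟨0, hn⟩ ω))
          calc exp (u * W₀ ω) = exp (-(s * W₀ ω)) := by rw [hu]; ring_nf
            _ ≤ 1 - s * W₀ ω + (s * W₀ ω) ^ 2 / 2 := h
            _ = 1 - s * W₀ ω + s ^ 2 * W₀ ω ^ 2 / 2 := by ring
      have h2 : ∫ ω, (1 - s * W₀ ω + s ^ 2 * W₀ ω ^ 2 / 2) ∂μ
          = 1 - s * EW + s ^ 2 * EW2 / 2 := by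
        have e1 : ∀ ω, 1 - s * W₀ ω + s ^ 2 * W₀ ω ^ 2 / 2
            = 1 + ((-s) * W₀ ω + (s ^ 2 / 2) * W₀ ω ^ 2) := fun ω => by ring
        have hg1 : Integrable (fun ω => -s * W₀ ω) μ := hintW.const_mul _
        have hg2 : Integrable (fun ω => s ^ 2 / 2 * W₀ ω ^ 2) μ := hintW2.const_mul _
        have hg : Integrable (fun ω => -s * W₀ ω + s ^ 2 / 2 * W₀ ω ^ 2) μ := hg1.add hg2
        simp_rw [e1]
        rw [integral_add (integrable_const 1) hg, integral_add hg1 hg2,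
          integral_const, integral_const_mul, integral_const_mul]
        simp only [measure_univ, probReal_univ, ENNReal.toReal_one, smul_eq_mul, mul_one, one_smul]
        rw [hEW, hEW2]
        ring
      rw [h2] at h1
      exact h1
    calc mgf W₀ μ u ≤ 1 - s * EW + s ^ 2 * EW2 / 2 := hb
      _ ≤ exp (-s * EW + s ^ 2 * EW2 / 2) := by
          have := Real.add_one_le_exp (-s * EW + s ^ 2 * EW2 / 2)
          linarith
  -- Chernoff bound on the sum
  have hX : (fun ω => ∑ i, W i ω) = ∑ i, W i := by
    ext ω; simp
  have hsum_int : Integrable (fun ω => exp (u * ∑ i, W i ω)) μ := by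
    refine (integrable_const (1 : ℝ)).mono'
      ((Finset.measurable_sum Finset.univ (fun i _ => hWmeas i)).const_mul u).exp.aestronglyMeasurable ?_
    filter_upwards with ω
    rw [Real.norm_eq_abs, abs_of_pos (exp_pos _)]
    calc exp (u * ∑ i, W i ω) ≤ exp 0 := by
          apply exp_le_exp.2
          exact mul_nonpos_of_nonpos_of_nonneg hu0
            (Finset.sum_nonneg fun i _ => hWpos i ω)
      _ = 1 := exp_zero
  have hcher := measure_le_le_exp_mul_mgf (X := fun ω => ∑ i, W i ω) (μ := μ) (t := u)
    t hu0 hsum_int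
  rw [hX] at hcher
  have hmgfsum : mgf (∑ i, W i) μ u = ∏ i, mgf (W i) μ u :=
    hindep.mgf_sum hWmeas Finset.univ
  have hmgfi : ∀ i, mgf (W i) μ u = mgf W₀ μ u := by
    intro i
    unfold mgf
    exact ((hident i).comp (measurable_id.const_mul u).exp).integral_eq
  have hprod : ∏ i, mgf (W i) μ u = (mgf W₀ μ u) ^ n := by
    simp [hmgfi, Finset.prod_const, Finset.card_univ]
  -- put everything together
  have key : (μ {ω | ∑ i, W i ω ≤ t}).toReal ≤ exp (-(t - n * EW) ^ 2 / (2 * n * EW2)) := by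
    calc (μ {ω | ∑ i, W i ω ≤ t}).toReal
        ≤ exp (-u * t) * mgf (∑ i, W i) μ u := hcher
      _ = exp (s * t) * (mgf W₀ μ u) ^ n := by rw [hmgfsum, hprod, hu]; ring_nf
      _ ≤ exp (s * t) * (exp (-s * EW + s ^ 2 * EW2 / 2)) ^ n := by
          gcongr
          exact mgf_nonneg
      _ = exp (s * t + n * (-s * EW + s ^ 2 * EW2 / 2)) := by
          rw [← Real.exp_nat_mul, ← Real.exp_add]
      _ = exp (-(t - n * EW) ^ 2 / (2 * n * EW2)) := by
          congr 1
          rw [hs]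
          field_simp
          ring
  rw [ENNReal.le_ofReal_iff_toReal_le (measure_ne_top μ _) (exp_pos _).le]
  exact key
end

section
/- Let W₁, …, Wₙ be i.i.d. nonnegative random variables with E[W₁²] < ∞ and E[W₁²] > 0. Then for any x > 0, with probability at least 1 − e^{−x} one has Σ_{i=1}^n W_i ≥ N_x(n), where N_x(n) = ( n E[W₁] − √( 2 x n E[W₁²] ) )₊ and (s)₊ = max{0, s}. -/
set_option autoImplicit false

open MeasureTheory ProbabilityTheory Real
open scoped ENNReal

/-- Quadratic upper bound on `exp (-u)` for `u ≥ 0`. -/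
lemma exp_neg_le_quadratic {u : ℝ} (hu : 0 ≤ u) :
    Real.exp (-u) ≤ 1 - u + u ^ 2 / 2 := by
  set f : ℝ → ℝ := fun u => 1 - u + u ^ 2 / 2 - Real.exp (-u) with hf
  have hd : ∀ v : ℝ, HasDerivAt f (-1 + v + Real.exp (-v)) v := by
    intro v
    have h1 : HasDerivAt (fun w : ℝ => Real.exp (-w)) (Real.exp (-v) * (-1)) v := by
      have := ((hasDerivAt_id v).neg).exp
      simpa using this
    have h2 : HasDerivAt (fun w : ℝ => 1 - w + w ^ 2 / 2)
        (0 - 1 + (2 * v ^ 1) / 2) v :=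
      (((hasDerivAt_const v (1:ℝ)).sub (hasDerivAt_id v)).add
        ((hasDerivAt_pow 2 v).div_const 2))
    have := h2.sub h1
    exact this.congr_deriv (by ring)
  have hmono : MonotoneOn f (Set.Ici (0:ℝ)) := by
    apply monotoneOn_of_deriv_nonneg (convex_Ici 0)
    · exact (Continuous.continuousOn (by fun_prop))
    · intro v _
      exact (hd v).differentiableAt.differentiableWithinAt
    · intro v hv
      rw [(hd v).deriv]
      have h3 : -v + 1 ≤ Real.exp (-v) := Real.add_one_le_exp (-v)
      linarith
  have h0 : f 0 = 0 := by simp [hf]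
  have := hmono (Set.self_mem_Ici) (Set.mem_Ici.2 hu) hu
  rw [h0] at this
  simp only [hf] at this
  linarith

lemma stmt15_key_arith (t nn EW EW2 x : ℝ) (hnn : 0 < nn) (hEW2 : 0 < EW2)
    (ht2 : t ^ 2 = 2 * x * nn * EW2) :
    t / (nn * EW2) * (nn * EW - t) +
      nn * (-(t / (nn * EW2)) * EW + (t / (nn * EW2)) ^ 2 * EW2 / 2) = -x := by
  have h1 : nn ≠ 0 := ne_of_gt hnn
  have h2 : EW2 ≠ 0 := ne_of_gt hEW2
  field_simp
  linear_combination (-1) * ht2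

/-- for i.i.d. nonnegative weights and any `x > 0`, with probability at
least `1 − e^{−x}`, `Σ Wᵢ ≥ N_x(n) = (n E[W₁] − √(2 x n E[W₁²]))₊`. -/
theorem stmt15
    {Ω : Type*} [MeasurableSpace Ω] {μ : Measure Ω} [IsProbabilityMeasure μ]
    {n : ℕ} (hn : 0 < n)
    (W : Fin n → Ω → ℝ) (hWmeas : ∀ i, Measurable (W i)) (hWpos : ∀ i ω, 0 ≤ W i ω)
    (hindep : iIndepFun W μ)
    (hident : ∀ i, IdentDistrib (W i) (W ⟨0, hn⟩) μ μ)
    (hW2 : MemLp (W ⟨0, hn⟩) 2 μ)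
    (EW EW2 : ℝ) (hEW : EW = ∫ ω, W ⟨0, hn⟩ ω ∂μ)
    (hEW2 : EW2 = ∫ ω, (W ⟨0, hn⟩ ω) ^ 2 ∂μ) (hEW2pos : 0 < EW2)
    (x : ℝ) (hx : 0 < x) :
    ENNReal.ofReal (1 - exp (-x)) ≤
      μ {ω | max ((n : ℝ) * EW - sqrt (2 * x * n * EW2)) 0 ≤ ∑ i, W i ω} := by
  have hnpos : (0:ℝ) < n := Nat.cast_pos.2 hn
  set W0 : Ω → ℝ := W ⟨0, hn⟩ with hW0
  set t : ℝ := sqrt (2 * x * n * EW2) with htdef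
  have htpos : 0 < t := sqrt_pos.2 (by positivity)
  have ht2 : t ^ 2 = 2 * x * n * EW2 := sq_sqrt (by positivity)
  set N : ℝ := (n : ℝ) * EW - t with hN
  set S : Ω → ℝ := fun ω => ∑ i, W i ω with hS
  have hSmeas : Measurable S := Finset.measurable_sum _ fun i _ => hWmeas i
  have hSpos : ∀ ω, 0 ≤ S ω := fun ω => Finset.sum_nonneg fun i _ => hWpos i ω
  by_cases hNpos : N ≤ 0
  · -- trivial case
    have hset : {ω | max N 0 ≤ S ω} = Set.univ := by
      ext ω
      simp only [Set.mem_setOf_eq, Set.mem_univ, iff_true]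
      rw [max_eq_right hNpos]
      exact hSpos ω
    rw [hset, measure_univ]
    exact ENNReal.ofReal_le_one.2 (by nlinarith [Real.exp_pos (-x)])
  push_neg at hNpos
  set lam : ℝ := t / ((n : ℝ) * EW2) with hlam
  have hlampos : 0 < lam := by positivity
  -- integrability of exponentials
  have hexp_int : ∀ (Y : Ω → ℝ), Measurable Y → (∀ ω, 0 ≤ Y ω) →
      Integrable (fun ω => Real.exp (-lam * Y ω)) μ := by
    intro Y hY hYpos
    refine Integrable.mono' (integrable_const 1)
      ((hY.const_mul (-lam)).exp.aestronglyMeasurable) ?_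
    filter_upwards with ω
    rw [Real.norm_eq_abs, abs_of_pos (Real.exp_pos _)]
    exact Real.exp_le_one_iff.2 (by nlinarith [hYpos ω])
  -- integrable W0 and W0^2
  have hint1 : Integrable W0 μ := hW2.integrable one_le_two
  have hint2 : Integrable (fun ω => (W0 ω) ^ 2) μ := hW2.integrable_sq
  -- mgf bound for W0
  have hmgf0 : mgf W0 μ (-lam) ≤ Real.exp (-lam * EW + lam ^ 2 * EW2 / 2) := by
    have hle : mgf W0 μ (-lam) ≤ 1 - lam * EW + lam ^ 2 * EW2 / 2 := by
      have hpt : ∀ ω, Real.exp (-lam * W0 ω) ≤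
          1 - lam * W0 ω + lam ^ 2 * (W0 ω) ^ 2 / 2 := by
        intro ω
        have := exp_neg_le_quadratic (u := lam * W0 ω)
          (mul_nonneg hlampos.le (hWpos _ ω))
        calc Real.exp (-lam * W0 ω) = Real.exp (-(lam * W0 ω)) := by ring_nf
          _ ≤ 1 - lam * W0 ω + (lam * W0 ω) ^ 2 / 2 := this
          _ = 1 - lam * W0 ω + lam ^ 2 * (W0 ω) ^ 2 / 2 := by ring
      have hrhs_int : Integrable
          (fun ω => 1 - lam * W0 ω + lam ^ 2 * (W0 ω) ^ 2 / 2) μ := by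
        exact ((integrable_const 1).sub (hint1.const_mul lam)).add
          ((hint2.const_mul (lam ^ 2)).div_const 2)
      have := integral_mono (hexp_int W0 (hWmeas _) (hWpos _)) hrhs_int
        (fun ω => hpt ω)
      rw [mgf]
      refine this.trans_eq ?_
      have e1 : ∫ ω, (1 - lam * W0 ω + lam ^ 2 * (W0 ω) ^ 2 / 2) ∂μ
          = (∫ ω, (1 - lam * W0 ω) ∂μ) + ∫ ω, lam ^ 2 * (W0 ω) ^ 2 / 2 ∂μ :=
        integral_add ((integrable_const 1).sub (hint1.const_mul lam))
          ((hint2.const_mul (lam ^ 2)).div_const 2)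
      have e2 : ∫ ω, (1 - lam * W0 ω) ∂μ = 1 - lam * EW := by
        rw [integral_sub (integrable_const 1) (hint1.const_mul lam),
          integral_const_mul, ← hEW]
        simp
      have e3 : ∫ ω, lam ^ 2 * (W0 ω) ^ 2 / 2 ∂μ = lam ^ 2 * EW2 / 2 := by
        rw [integral_div, integral_const_mul, ← hEW2]
      rw [e1, e2, e3]
    refine hle.trans ?_
    have := Real.add_one_le_exp (-lam * EW + lam ^ 2 * EW2 / 2)
    linarith
  have hmgf0_nonneg : 0 ≤ mgf W0 μ (-lam) := mgf_nonneg
  -- mgf of the sum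
  have hmgfS : mgf S μ (-lam) ≤ Real.exp ((n : ℝ) * (-lam * EW + lam ^ 2 * EW2 / 2)) := by
    have hsum : S = ∑ i, W i := by
      funext ω; simp [hS]
    have := hindep.mgf_sum (t := -lam) hWmeas Finset.univ
    rw [hsum]
    rw [this]
    have heach : ∀ i : Fin n, mgf (W i) μ (-lam) = mgf W0 μ (-lam) := by
      intro i
      have hid : IdentDistrib (fun ω => Real.exp (-lam * W i ω))
          (fun ω => Real.exp (-lam * W0 ω)) μ μ :=
        (hident i).comp ((measurable_id.const_mul (-lam)).exp)
      exact hid.integral_eq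
    calc ∏ i : Fin n, mgf (W i) μ (-lam) = (mgf W0 μ (-lam)) ^ n := by
          rw [Finset.prod_congr rfl fun i _ => heach i, Finset.prod_const,
            Finset.card_univ, Fintype.card_fin]
      _ ≤ (Real.exp (-lam * EW + lam ^ 2 * EW2 / 2)) ^ n :=
          pow_le_pow_left₀ hmgf0_nonneg hmgf0 n
      _ = Real.exp ((n : ℝ) * (-lam * EW + lam ^ 2 * EW2 / 2)) := by
          rw [← Real.exp_nat_mul]
  -- Chernoff
  have hcher : (μ {ω | S ω ≤ N}).toReal ≤ Real.exp (-x) := by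
    have hSexp : Integrable (fun ω => Real.exp (-lam * S ω)) μ :=
      hexp_int S hSmeas hSpos
    have := measure_le_le_exp_mul_mgf (X := S) (μ := μ) N (neg_nonpos.2 hlampos.le) hSexp
    refine this.trans ?_
    calc Real.exp (-(-lam) * N) * mgf S μ (-lam)
        ≤ Real.exp (lam * N) * Real.exp ((n : ℝ) * (-lam * EW + lam ^ 2 * EW2 / 2)) := by
          rw [neg_neg]
          exact mul_le_mul_of_nonneg_left hmgfS (Real.exp_pos _).le
      _ = Real.exp (lam * N + (n : ℝ) * (-lam * EW + lam ^ 2 * EW2 / 2)) := by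
          rw [← Real.exp_add]
      _ = Real.exp (-x) := by
          congr 1
          rw [hlam, hN]
          exact stmt15_key_arith t n EW EW2 x hnpos hEW2pos ht2
  -- finish
  have hmaxN : max N 0 = N := max_eq_left hNpos.le
  rw [hmaxN]
  set A : Set Ω := {ω | N ≤ S ω} with hA
  have hAmeas : MeasurableSet A := measurableSet_le measurable_const hSmeas
  have hcompl : μ Aᶜ ≤ ENNReal.ofReal (Real.exp (-x)) := by
    have hsub : Aᶜ ⊆ {ω | S ω ≤ N} := by
      intro ω hω
      simp only [hA, Set.mem_compl_iff, Set.mem_setOf_eq, not_le] at hω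
      exact le_of_lt hω
    refine (measure_mono hsub).trans ?_
    rw [← ENNReal.ofReal_toReal (measure_ne_top μ {ω | S ω ≤ N})]
    exact ENNReal.ofReal_le_ofReal hcher
  have hsum1 : μ A + μ Aᶜ = 1 := by
    rw [measure_add_measure_compl hAmeas, measure_univ]
  have hAeq : μ A = 1 - μ Aᶜ :=
    ENNReal.eq_sub_of_add_eq (measure_ne_top μ _) hsum1
  rw [hAeq]
  calc ENNReal.ofReal (1 - Real.exp (-x))
      = ENNReal.ofReal 1 - ENNReal.ofReal (Real.exp (-x)) :=
        ENNReal.ofReal_sub 1 (Real.exp_pos _).le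
    _ = 1 - ENNReal.ofReal (Real.exp (-x)) := by rw [ENNReal.ofReal_one]
    _ ≤ 1 - μ Aᶜ := tsub_le_tsub_left hcompl 1
end
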